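/- arXiv:2210.17489 — 7 statements merged into one kernel-verified Lean document; each statement's English description precedes it below -/
import Mathlib

section
/- For every connected graph G on a finite vertex set of even order, the square G^2 (where two vertices are adjacent iff they are at distance at most 2 in G) contains a perfect matching. -/
open SimpleGraph Finset

/-- The `k`-th power of a graph `G`: two vertices are adjacent iff they are distinct
and at distance at most `k` in `G`. -/
def gpow {V : Type*} (G : SimpleGraph V) (k : ℕ) : SimpleGraph V where
  Adj u v := u ≠ v ∧ G.dist u v ≤ k
  symm := ⟨fun u v h => ⟨h.1.symm, by rw [SimpleGraph.dist_comm]; exact h.2⟩⟩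
  loopless := ⟨fun u h => h.1 rfl⟩

/-- `H` contains a `K_r`-factor: a partition of the vertex set into parts of size `r`,
each inducing a clique in `H`. -/
def HasCliqueFactor {V : Type*} [Fintype V] [DecidableEq V] (H : SimpleGraph V) (r : ℕ) : Prop :=
  ∃ P : Finpartition (Finset.univ : Finset V),
    ∀ p ∈ P.parts, p.card = r ∧ H.IsClique (p : Set V)

/-- `A` is contained in a subtree of `G` of order at most `m`. -/
def InSubtree {V : Type*} (G : SimpleGraph V) (A : Set V) (m : ℕ) : Prop :=
  ∃ T : G.Subgraph, T.coe.IsTree ∧ A ⊆ T.verts ∧ T.verts.ncard ≤ m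

/-- `G` is `k`-connected: more than `k` vertices, and deleting any fewer than `k`
vertices leaves a connected graph. -/
def KConnected {V : Type*} (k : ℕ) (G : SimpleGraph V) : Prop :=
  k < Nat.card V ∧ ∀ S : Set V, S.ncard < k → (G.induce Sᶜ).Connected


universe u
variable {W : Type u} {H : SimpleGraph W}

/-- walk confined to `t` gives reachability in the induced graph -/
lemma reach_induce {t : Set W} {x y : W} (w : H.Walk x y)
    (hs : ∀ z ∈ w.support, z ∈ t) (hx : x ∈ t) (hy : y ∈ t) :
    (H.induce t).Reachable ⟨x, hx⟩ ⟨y, hy⟩ := by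
  induction w with
  | nil => rfl
  | @cons a b c h q ih =>
    have hb : b ∈ t := hs b (by simp)
    have h1 : (H.induce t).Adj ⟨a, hx⟩ ⟨b, hb⟩ := by simpa using h
    exact h1.reachable.trans (ih (fun z hz => hs z (by simp [hz])) hb hy)

lemma dist_le_dist_induce {t : Set W} (x y : ↥t)
    (h : (H.induce t).Reachable x y) : H.dist ↑x ↑y ≤ (H.induce t).dist x y := by
  obtain ⟨p, hp⟩ := h.exists_walk_length_eq_dist
  have hm := SimpleGraph.dist_le (p.map (⟨Subtype.val, fun {a b} hab => hab⟩ : H.induce t →g H))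
  rwa [SimpleGraph.Walk.length_map, hp] at hm

lemma mem_support_dist [DecidableEq W] {r x z : W} (p : H.Walk r x) (hp : p.length = H.dist r x)
    (hz : z ∈ p.support) : H.dist r z + H.dist z x ≤ H.dist r x := by
  have h1 := SimpleGraph.dist_le (p.takeUntil z hz)
  have h2 := SimpleGraph.dist_le (p.dropUntil z hz)
  have h3 : (p.takeUntil z hz).length + (p.dropUntil z hz).length = p.length := by
    rw [← SimpleGraph.Walk.length_append, p.take_spec hz]
  omega

def PM2 (H : SimpleGraph W) : Prop :=
  ∃ f : W → W, Function.Involutive f ∧ ∀ x, x ≠ f x ∧ H.dist x (f x) ≤ 2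

lemma glue {a b : W} (hab : a ≠ b) (hd : H.dist a b ≤ 2)
    (hcz : (H.induce ({a, b}ᶜ : Set W)).Connected)
    (hf' : PM2 (H.induce ({a, b}ᶜ : Set W))) : PM2 H := by
  classical
  obtain ⟨f', hinv', hadj'⟩ := hf'
  have hmem : ∀ x : W, x ≠ a → x ≠ b → x ∈ ({a, b} : Set W)ᶜ := by
    intro x h1 h2; simp [h1, h2]
  refine ⟨fun x => if hxa : x = a then b else if hxb : x = b then a
      else ↑(f' ⟨x, hmem x hxa hxb⟩), ?_, ?_⟩
  · intro x
    by_cases hxa : x = a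
    · subst hxa; simp [hab.symm]
    · by_cases hxb : x = b
      · subst hxb; simp [hab]
      · have hx : x ∈ ({a, b} : Set W)ᶜ := hmem x hxa hxb
        have hya : (↑(f' ⟨x, hx⟩) : W) ≠ a := fun h =>
          (f' ⟨x, hx⟩).2 (show (↑(f' ⟨x, hx⟩) : W) ∈ ({a, b} : Set W) by simp [h])
        have hyb : (↑(f' ⟨x, hx⟩) : W) ≠ b := fun h =>
          (f' ⟨x, hx⟩).2 (show (↑(f' ⟨x, hx⟩) : W) ∈ ({a, b} : Set W) by simp [h])
        simp only [dif_neg hxa, dif_neg hxb, dif_neg hya, dif_neg hyb]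
        exact congrArg Subtype.val (hinv' ⟨x, hx⟩)
  · intro x
    by_cases hxa : x = a
    · subst hxa; simp only [dif_pos rfl]; exact ⟨hab, hd⟩
    · by_cases hxb : x = b
      · subst hxb; simp only [dif_neg hxa, dif_pos rfl]
        exact ⟨hab.symm, by rwa [SimpleGraph.dist_comm]⟩
      · have hx : x ∈ ({a, b} : Set W)ᶜ := hmem x hxa hxb
        simp only [dif_neg hxa, dif_neg hxb]
        obtain ⟨hne, hle⟩ := hadj' ⟨x, hx⟩
        refine ⟨fun h => hne (Subtype.ext h), ?_⟩
        calc H.dist x ↑(f' ⟨x, hx⟩)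
            ≤ (H.induce ({a, b}ᶜ : Set W)).dist ⟨x, hx⟩ (f' ⟨x, hx⟩) :=
              dist_le_dist_induce ⟨x, hx⟩ (f' ⟨x, hx⟩) (hcz.preconnected _ _)
          _ ≤ 2 := hle

lemma connected_induce_of_walks {t : Set W} {r : W} (hr : r ∈ t)
    (h : ∀ x ∈ t, ∃ pw : H.Walk r x, ∀ z ∈ pw.support, z ∈ t) :
    (H.induce t).Connected := by
  rw [SimpleGraph.connected_iff]
  refine ⟨?_, ⟨⟨r, hr⟩⟩⟩
  rintro ⟨x, hx⟩ ⟨y, hy⟩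
  obtain ⟨px, hpx⟩ := h x hx
  obtain ⟨py, hpy⟩ := h y hy
  exact (reach_induce px hpx hr hx).symm.trans (reach_induce py hpy hr hy)

lemma key : ∀ (n : ℕ) (W : Type u), ∀ (_ : Finite W), ∀ (H : SimpleGraph W),
    Nat.card W = n → H.Connected → Even n → PM2 H := by
  intro n
  induction n using Nat.strongRecOn with
  | ind n IH =>
  intro W _ H hcard hconn heven
  classical
  haveI : Fintype W := Fintype.ofFinite W
  haveI : Nonempty W := hconn.nonempty
  have hn0 : n ≠ 0 := by
    rintro rfl
    rw [Nat.card_eq_fintype_card] at hcard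
    exact Fintype.card_ne_zero hcard
  have hn2 : 2 ≤ n := by obtain ⟨k, hk⟩ := heven; omega
  obtain ⟨r⟩ := ‹Nonempty W›
  -- base case n = 2
  by_cases hbase : n = 2
  · have : Nontrivial W := by
      rw [← Fintype.one_lt_card_iff_nontrivial, ← Nat.card_eq_fintype_card]; omega
    obtain ⟨x, hx⟩ := exists_ne r
    have htwo : ∀ y : W, y = r ∨ y = x := by
      have hcard2 : Fintype.card W = 2 := by rw [← Nat.card_eq_fintype_card]; omega
      have huniv : ({x, r} : Finset W) = Finset.univ :=
        Finset.eq_univ_of_card _ (by rw [Finset.card_pair hx, hcard2])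
      intro y
      have : y ∈ ({x, r} : Finset W) := huniv ▸ Finset.mem_univ y
      simp at this
      tauto
    have hadj : H.Adj r x := by
      obtain ⟨pw⟩ := hconn r x
      obtain ⟨z, hz, q, -⟩ := SimpleGraph.Walk.exists_eq_cons_of_ne (Ne.symm hx) pw
      rcases htwo z with rfl | rfl
      · exact absurd rfl hz.ne'
      · exact hz
    refine ⟨fun y => if y = r then x else r, ?_, ?_⟩
    · intro y
      by_cases hy : y = r
      · simp [hy, hx]
      · simp [hy]
        rcases htwo y with rfl | rfl
        · exact absurd rfl hy
        · rfl
    · intro y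
      have hd1 : H.dist r x ≤ 2 := by
        have := SimpleGraph.dist_le (SimpleGraph.Walk.cons hadj SimpleGraph.Walk.nil)
        simp only [SimpleGraph.Walk.length_cons, SimpleGraph.Walk.length_nil] at this
        omega
      by_cases hy : y = r
      · subst hy; simp only [if_pos rfl]; exact ⟨Ne.symm hx, hd1⟩
      · rcases htwo y with rfl | rfl
        · exact absurd rfl hy
        · simp only [if_neg hy]
          exact ⟨hx, by rwa [SimpleGraph.dist_comm]⟩
  -- main case: n ≥ 4
  have hn4 : 4 ≤ n := by obtain ⟨k, hk⟩ := heven; omega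
  obtain ⟨u, -, hu⟩ := Finset.exists_mem_eq_sup Finset.univ Finset.univ_nonempty
    (fun x => H.dist r x)
  set d := Finset.univ.sup (fun x => H.dist r x) with hdd
  have hle : ∀ x, H.dist r x ≤ d := fun x => Finset.le_sup (Finset.mem_univ x)
  have hd1 : 1 ≤ d := by
    have : Nontrivial W := by rw [← Fintype.one_lt_card_iff_nontrivial, ← Nat.card_eq_fintype_card]; omega
    obtain ⟨x, hx⟩ := exists_ne r
    have h0 : H.dist r x ≠ 0 := by
      rw [SimpleGraph.dist_ne_zero_iff_ne_and_reachable]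
      exact ⟨Ne.symm hx, hconn r x⟩
    have := hle x; omega
  have hru : r ≠ u := by
    intro h; rw [← h, SimpleGraph.dist_self] at hu; omega
  obtain ⟨P, hP⟩ := hconn.exists_walk_length_eq_dist r u
  obtain ⟨p, h', q, hQ⟩ := SimpleGraph.Walk.exists_eq_cons_of_ne (Ne.symm hru) P.reverse
  have hqlen : q.length + 1 = d := by
    have hl := congrArg SimpleGraph.Walk.length hQ
    rw [SimpleGraph.Walk.length_reverse, SimpleGraph.Walk.length_cons] at hl
    omega
  have hrp_le : H.dist r p + 1 ≤ d := by
    have := SimpleGraph.dist_le q.reverse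
    rw [SimpleGraph.Walk.length_reverse] at this; omega
  have hpu : H.dist p u = 1 :=
    SimpleGraph.dist_eq_one_iff_adj.mpr h'.symm
  have hrp : H.dist r p + 1 = d := by
    have ht := hconn.dist_triangle (u := r) (v := p) (w := u)
    rw [hpu] at ht
    omega
  have hsub : ∀ x : W, ∀ pw : H.Walk r x, pw.length = H.dist r x →
      ∀ z ∈ pw.support, H.dist r z + H.dist z x ≤ d :=
    fun x pw hpw z hz => le_trans (mem_support_dist pw hpw hz) (hle x)
  by_cases hw : ∃ w, w ≠ u ∧ H.Adj p w ∧ H.dist r w = d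
  · obtain ⟨w, hwu, hpw, hrw⟩ := hw
    have hab : u ≠ w := Ne.symm hwu
    have hdist : H.dist u w ≤ 2 := by
      have := SimpleGraph.dist_le
        (SimpleGraph.Walk.cons h' (SimpleGraph.Walk.cons hpw SimpleGraph.Walk.nil))
      simpa using this
    have hrw' : r ≠ w := by
      intro h; rw [← h, SimpleGraph.dist_self] at hrw; omega
    have hrt : r ∈ ({u, w} : Set W)ᶜ := by simp [hru, hrw']
    have hconn' : (H.induce (({u, w} : Set W)ᶜ)).Connected := by
      apply connected_induce_of_walks hrt
      intro x hx
      simp only [Set.mem_compl_iff, Set.mem_insert_iff, Set.mem_singleton_iff] at hx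
      push_neg at hx
      obtain ⟨pw, hpw⟩ := hconn.exists_walk_length_eq_dist r x
      refine ⟨pw, fun z hz => ?_⟩
      have hkey := hsub x pw hpw z hz
      simp only [Set.mem_compl_iff, Set.mem_insert_iff, Set.mem_singleton_iff]
      push_neg
      constructor
      · rintro rfl
        rw [← hu] at hkey
        have : H.dist z x = 0 := by omega
        rw [hconn.dist_eq_zero_iff] at this
        exact hx.1 this.symm
      · rintro rfl
        rw [hrw] at hkey
        have : H.dist z x = 0 := by omega
        rw [hconn.dist_eq_zero_iff] at this
        exact hx.2 this.symm
    have hcardt : Nat.card ↥(({u, w} : Set W)ᶜ) = n - 2 := by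
      have h1 := Set.ncard_add_ncard_compl ({u, w} : Set W) (Set.toFinite _) (Set.toFinite _)
      rw [Set.ncard_pair hab] at h1
      rw [Nat.card_coe_set_eq]
      omega
    have hpm' := IH (n - 2) (by omega) ↥(({u, w} : Set W)ᶜ) inferInstance
      (H.induce (({u, w} : Set W)ᶜ)) hcardt hconn'
      (by obtain ⟨k, hk⟩ := heven; exact ⟨k - 1, by omega⟩)
    exact glue hab hdist hconn' hpm'
  · -- no second deep neighbor of p : pair u with p
    push_neg at hw
    have hup : u ≠ p := by
      intro h; rw [← h, SimpleGraph.dist_self] at hpu; omega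
    have hd2 : 2 ≤ d := by
      by_contra hcon
      have hd1' : d = 1 := by omega
      have hrp0 : r = p := by
        rw [← hconn.dist_eq_zero_iff (u := r) (v := p)] at *
        omega
      have hcard3 : 2 < Fintype.card W := by rw [← Nat.card_eq_fintype_card]; omega
      have : (Finset.univ \ ({r, u} : Finset W)).Nonempty := by
        rw [← Finset.card_pos, Finset.card_sdiff_of_subset (Finset.subset_univ _)]
        have := Finset.card_pair hru
        have h2 : ({r, u} : Finset W).card ≤ 2 := by omega
        rw [Finset.card_univ]
        omega
      obtain ⟨x, hxmem⟩ := this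
      simp only [Finset.mem_sdiff, Finset.mem_insert, Finset.mem_singleton] at hxmem
      push_neg at hxmem
      obtain ⟨-, hxr, hxu⟩ := hxmem
      have hdx : H.dist r x = 1 := by
        have h0 : H.dist r x ≠ 0 := by
          rw [SimpleGraph.dist_ne_zero_iff_ne_and_reachable]
          exact ⟨Ne.symm hxr, hconn r x⟩
        have := hle x; omega
      have : H.Adj p x := by
        rw [← hrp0, ← SimpleGraph.dist_eq_one_iff_adj]; exact hdx
      exact hw x hxu this (by omega)
    have hrp' : r ≠ p := by
      intro h; rw [← h, SimpleGraph.dist_self] at hrp; omega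
    have hrt : r ∈ ({u, p} : Set W)ᶜ := by simp [hru, hrp']
    have hdistup : H.dist u p ≤ 2 := by rw [SimpleGraph.dist_comm] at hpu; omega
    have hconn' : (H.induce (({u, p} : Set W)ᶜ)).Connected := by
      apply connected_induce_of_walks hrt
      intro x hx
      simp only [Set.mem_compl_iff, Set.mem_insert_iff, Set.mem_singleton_iff] at hx
      push_neg at hx
      obtain ⟨pw, hpw⟩ := hconn.exists_walk_length_eq_dist r x
      refine ⟨pw, fun z hz => ?_⟩
      have hkey := hsub x pw hpw z hz
      simp only [Set.mem_compl_iff, Set.mem_insert_iff, Set.mem_singleton_iff]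
      push_neg
      constructor
      · rintro rfl
        rw [← hu] at hkey
        have : H.dist z x = 0 := by omega
        rw [hconn.dist_eq_zero_iff] at this
        exact hx.1 this.symm
      · rintro rfl
        -- z = p on a shortest r-x walk
        have hzx0 : H.dist z x ≠ 0 := by
          rw [SimpleGraph.dist_ne_zero_iff_ne_and_reachable]
          exact ⟨Ne.symm hx.2, hconn z x⟩
        have hzx1 : H.dist z x = 1 := by omega
        have hadjzx : H.Adj z x := SimpleGraph.dist_eq_one_iff_adj.mp hzx1
        have hdx : H.dist r x = d := by
          have h1 := mem_support_dist pw hpw hz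
          have h2 := hle x
          omega
        exact hw x hx.1 hadjzx hdx
    have hcardt : Nat.card ↥(({u, p} : Set W)ᶜ) = n - 2 := by
      have h1 := Set.ncard_add_ncard_compl ({u, p} : Set W) (Set.toFinite _) (Set.toFinite _)
      rw [Set.ncard_pair hup] at h1
      rw [Nat.card_coe_set_eq]
      omega
    have hpm' := IH (n - 2) (by omega) ↥(({u, p} : Set W)ᶜ) inferInstance
      (H.induce (({u, p} : Set W)ᶜ)) hcardt hconn'
      (by obtain ⟨k, hk⟩ := heven; exact ⟨k - 1, by omega⟩)
    exact glue hup hdistup hconn' hpm'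

theorem square_has_perfect_matching {V : Type*} [Fintype V] (G : SimpleGraph V)
    (hG : G.Connected) (heven : Even (Fintype.card V)) :
    ∃ M : (gpow G 2).Subgraph, M.IsPerfectMatching := by
  obtain ⟨f, hinv, hadj⟩ := key (Fintype.card V) V inferInstance G
    (Nat.card_eq_fintype_card) hG heven
  refine ⟨{ verts := Set.univ
            Adj := fun x y => f x = y
            adj_sub := fun {x y} h => h ▸ (And.intro (hadj x).1 (hadj x).2 : (gpow G 2).Adj x (f x))
            edge_vert := fun _ => Set.mem_univ _
            symm := ⟨fun x y h => by
              rw [← h, hinv x]⟩ }, ?_, fun v => Set.mem_univ v⟩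
  intro v _
  exact ⟨f v, rfl, fun y hy => Eq.symm (hy : f v = y)⟩
end

section
/- Let r ≥ 2 and let G be a connected graph whose order is divisible by r. Then G^{2r-2} contains a K_r-factor, i.e., a spanning subgraph each of whose components is a complete graph on r vertices. -/
open SimpleGraph Finset

section Aux
set_option linter.unusedVariables false
set_option linter.unusedSectionVars false
variable {V : Type*} [Fintype V] [DecidableEq V] (G : SimpleGraph V)


/-- hom from induced subgraph to ambient graph -/
def homVal (s : Set V) : G.induce s →g G := ⟨Subtype.val, fun {a b} h => h⟩

/-- distance in ambient graph is at most distance witnessed by induced walk -/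
lemma dist_le_walk {s : Set V} {a b : ↥s} (p : (G.induce s).Walk a b) :
    G.dist a.1 b.1 ≤ p.length := by
  have h := SimpleGraph.dist_le (p.map (homVal G s)); rw [Walk.length_map] at h; exact h

/-- vertices in a small connected induced subgraph are close in G -/
lemma dist_add_one_le_card {A : Finset V} (h : (G.induce (↑A : Set V)).Connected)
    {a b : V} (ha : a ∈ A) (hb : b ∈ A) : G.dist a b + 1 ≤ A.card := by
  obtain ⟨p, hp, -⟩ := h.exists_path_of_dist ⟨a, by simpa using ha⟩ ⟨b, by simpa using hb⟩
  have h1 : G.dist a b ≤ p.length := dist_le_walk G p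
  have h2 : p.length < Fintype.card ↥(↑A : Set V) := hp.length_lt
  simp only [show Fintype.card ↥(↑A : Set V) = A.card by simp] at h2
  omega

/-- flatten a doubly-induced connected graph -/
lemma flatten_connected {s : Set V} {t : Set ↥s}
    (h : ((G.induce s).induce t).Connected) :
    (G.induce (Subtype.val '' t)).Connected := by
  refine h.map ⟨fun a => ⟨a.1.1, ⟨a.1, a.2, rfl⟩⟩, fun {a b} h => h⟩ ?_
  rintro ⟨w, c, hc, rfl⟩
  exact ⟨⟨c, hc⟩, rfl⟩

lemma induce_singleton_connected (x : V) : (G.induce {x}).Connected := by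
  have : Nonempty ↥({x} : Set V) := ⟨⟨x, rfl⟩⟩
  refine ⟨fun a b => ?_⟩
  have hab : a = b := Subtype.ext (a.2.trans b.2.symm)
  exact hab ▸ Reachable.refl _

/-- glue a vertex adjacent to a connected set -/
lemma glue_connected {C : Finset V} {x y : V} (hy : y ∈ C) (hadj : G.Adj x y)
    (hC : (G.induce (↑C : Set V)).Connected) :
    (G.induce (↑(insert x C) : Set V)).Connected := by
  rw [Finset.coe_insert, Set.insert_eq]
  exact connected_induce_union (induce_singleton_connected G x).preconnected hC.preconnected rfl
    (by simpa using hy) hadj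

/-- remove the vertex farthest from x: still connected -/
lemma erase_farthest {C : Finset V} (hC : (G.induce (↑C : Set V)).Connected)
    {x : V} (hx : x ∈ C) (h2 : 2 ≤ C.card) :
    ∃ w ∈ C, w ≠ x ∧ (G.induce (↑(C.erase w) : Set V)).Connected := by
  classical
  set H := G.induce (↑C : Set V) with hH
  have hxm : x ∈ (↑C : Set V) := by simpa using hx
  set x₀ : ↥(↑C : Set V) := ⟨x, hxm⟩ with hx₀
  obtain ⟨w, -, hw⟩ := Finset.exists_max_image (univ : Finset ↥(↑C : Set V))
    (fun z => H.dist x₀ z) ⟨x₀, mem_univ _⟩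
  have hwmax : ∀ z : ↥(↑C : Set V), H.dist x₀ z ≤ H.dist x₀ w := fun z => hw z (mem_univ _)
  -- w ≠ x₀
  obtain ⟨y, hyC, hyx⟩ : ∃ y ∈ C, y ≠ x := by
    obtain ⟨y, hy, hne⟩ := Finset.exists_mem_ne (s := C) (by omega) x
    exact ⟨y, hy, hne⟩
  set y₀ : ↥(↑C : Set V) := ⟨y, by simpa using hyC⟩ with hy₀def
  have hy₀ : H.dist x₀ y₀ ≠ 0 := by
    have h := hC.pos_dist_of_ne (u := x₀) (v := y₀)
      (by simp only [hx₀, hy₀def, ne_eq, Subtype.ext_iff]; exact fun h => hyx h.symm)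
    omega
  have hwx : w ≠ x₀ := by
    intro h
    have h2 := hwmax y₀
    rw [h, SimpleGraph.dist_self] at h2
    omega
  refine ⟨w.1, by simpa using w.2, by simpa [hx₀, Subtype.ext_iff] using hwx, ?_⟩
  -- connectivity of C.erase w via patches
  apply SimpleGraph.induce_connected_of_patches x
    (by
      simp only [Finset.coe_erase, Set.mem_diff, Finset.mem_coe, Set.mem_singleton_iff]
      exact ⟨hx, fun h => hwx (Subtype.ext h.symm)⟩)
  intro v hv
  simp only [Finset.coe_erase, Set.mem_diff, Finset.mem_coe, Set.mem_singleton_iff] at hv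
  obtain ⟨hvC, hvw⟩ := hv
  set v₀ : ↥(↑C : Set V) := ⟨v, by simpa using hvC⟩ with hv₀
  obtain ⟨p, hp, hplen⟩ := hC.exists_path_of_dist x₀ v₀
  have hwns : w ∉ p.support := by
    intro hws
    have h1 : (p.takeUntil w hws).length + (p.dropUntil w hws).length = p.length := by
      rw [← SimpleGraph.Walk.length_append, SimpleGraph.Walk.take_spec]
    have h2 : H.dist x₀ w ≤ (p.takeUntil w hws).length := SimpleGraph.dist_le _
    have h3 : H.dist w v₀ ≤ (p.dropUntil w hws).length := SimpleGraph.dist_le _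
    have h4 : H.dist w v₀ ≠ 0 := by
      have := hC.pos_dist_of_ne (u := w) (v := v₀)
        (by simp [hv₀, Subtype.ext_iff]; exact fun h => hvw h.symm)
      omega
    have h5 := hwmax v₀
    omega
    -- dist x v = len = take + drop ≥ dist x w + dist w v ≥ dist x w + 1 > dist x w ≥ dist x v
  refine ⟨Subtype.val '' {z | z ∈ p.support}, ?_, ⟨x₀, p.start_mem_support, rfl⟩,
    ⟨v₀, p.end_mem_support, rfl⟩, ?_⟩
  · rintro _ ⟨z, hz, rfl⟩
    simp only [Finset.coe_erase, Set.mem_diff, Finset.mem_coe, Set.mem_singleton_iff]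
    refine ⟨by simpa using z.2, fun h => hwns (by rwa [show z = w from Subtype.ext h] at hz)⟩
  · exact (flatten_connected G (p.connected_induce_support)).preconnected _ _

/-- remove m vertices from a connected induced subgraph, avoiding x, keeping connectivity -/
lemma remove_m (m : ℕ) : ∀ (C : Finset V), (G.induce (↑C : Set V)).Connected →
    ∀ x ∈ C, m < C.card →
    ∃ D ⊆ C, D.card = m ∧ x ∉ D ∧ (G.induce (↑(C \ D) : Set V)).Connected := by
  induction m with
  | zero =>
    intro C hC x hx _
    exact ⟨∅, by simp, by simp, by simp, by rw [Finset.sdiff_empty]; exact hC⟩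
  | succ m ih =>
    intro C hC x hx hm
    obtain ⟨w, hwC, hwx, hconn⟩ := erase_farthest G hC hx (by omega)
    obtain ⟨D, hD, hDcard, hxD, hconn'⟩ := ih (C.erase w) hconn x
      (Finset.mem_erase.2 ⟨fun h => hwx h.symm, hx⟩)
      (by rw [Finset.card_erase_of_mem hwC]; omega)
    refine ⟨insert w D, ?_, ?_, ?_, ?_⟩
    · exact Finset.insert_subset hwC (hD.trans (Finset.erase_subset _ _))
    · rw [Finset.card_insert_of_notMem (fun h => (Finset.mem_erase.1 (hD h)).1 rfl), hDcard]
    · simp only [Finset.mem_insert]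
      rintro (h | h)
      · exact hwx h.symm
      · exact hxD h
    · have : C \ insert w D = (C.erase w) \ D := by
        ext z
        simp [Finset.mem_erase, Finset.mem_sdiff, Finset.mem_insert]
        tauto
      rw [this]
      exact hconn'

/-- reachability within the induced subgraph on s, as a relation on V -/
def Rch (s : Finset V) (y z : V) : Prop :=
  ∃ (hy : y ∈ (↑s : Set V)) (hz : z ∈ (↑s : Set V)),
    (G.induce (↑s : Set V)).Reachable ⟨y, hy⟩ ⟨z, hz⟩

/-- the connected component of y in the induced subgraph on s, as a Finset of V -/
noncomputable def K (s : Finset V) (y : V) : Finset V :=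
  @Finset.filter _ (Rch G s y) (Classical.decPred _) s

lemma mem_K {s : Finset V} {y z : V} : z ∈ K G s y ↔ z ∈ s ∧ Rch G s y z := by
  simp [K, Finset.mem_filter]

lemma Rch_symm {s : Finset V} {y z : V} (h : Rch G s y z) : Rch G s z y := by
  obtain ⟨hy, hz, hr⟩ := h; exact ⟨hz, hy, hr.symm⟩

lemma Rch_trans {s : Finset V} {x y z : V} (h : Rch G s x y) (h' : Rch G s y z) :
    Rch G s x z := by
  obtain ⟨hx, hy, hr⟩ := h; obtain ⟨hy', hz, hr'⟩ := h'
  exact ⟨hx, hz, hr.trans (by convert hr' using 2)⟩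

lemma Rch_adj {s : Finset V} {y z : V} (hy : y ∈ s) (hz : z ∈ s) (h : G.Adj y z) :
    Rch G s y z :=
  ⟨by simpa using hy, by simpa using hz, SimpleGraph.Adj.reachable h⟩

lemma K_subset {s : Finset V} {y : V} : K G s y ⊆ s := fun z hz => (mem_K G |>.1 hz).1

lemma mem_K_self {s : Finset V} {y : V} (hy : y ∈ s) : y ∈ K G s y :=
  (mem_K G).2 ⟨hy, by simpa using hy, by simpa using hy, Reachable.refl _⟩

lemma K_eq_of_mem {s : Finset V} {y z : V} (hz : z ∈ K G s y) : K G s y = K G s z := by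
  obtain ⟨hzs, hr⟩ := (mem_K G).1 hz
  ext w
  simp only [mem_K]
  exact ⟨fun ⟨hw, h⟩ => ⟨hw, Rch_trans G (Rch_symm G hr) h⟩,
    fun ⟨hw, h⟩ => ⟨hw, Rch_trans G hr h⟩⟩

lemma K_disjoint {s : Finset V} {y z : V} (h : z ∉ K G s y) (hz : z ∈ s) :
    Disjoint (K G s y) (K G s z) := by
  rw [Finset.disjoint_left]
  intro w hwy hwz
  obtain ⟨hws, hry⟩ := (mem_K G).1 hwy
  obtain ⟨-, hrz⟩ := (mem_K G).1 hwz
  exact h ((mem_K G).2 ⟨hz, Rch_trans G hry (Rch_symm G hrz)⟩)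

lemma K_mono {s t : Finset V} (hst : s ⊆ t) {y z : V} (h : z ∈ K G s y) : z ∈ K G t y := by
  obtain ⟨hzs, hy, hz, hr⟩ := (mem_K G).1 h
  refine (mem_K G).2 ⟨hst hzs, by simpa using hst (by simpa using hy),
    by simpa using hst hzs, ?_⟩
  have := hr.map (SimpleGraph.induceHomOfLE G (by exact_mod_cast hst : (↑s : Set V) ≤ ↑t)).toHom
  convert this using 2 <;> rfl

lemma K_connected {s : Finset V} {y : V} (hy : y ∈ s) :
    (G.induce (↑(K G s y) : Set V)).Connected := by
  apply SimpleGraph.induce_connected_of_patches y (by simpa using mem_K_self G hy)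
  intro v hv
  obtain ⟨hvs, hyS, hvS, hr⟩ := (mem_K G).1 (by simpa using hv)
  obtain ⟨p⟩ := hr
  refine ⟨Subtype.val '' {z | z ∈ p.support}, ?_, ⟨⟨y, hyS⟩, p.start_mem_support, rfl⟩,
    ⟨⟨v, hvS⟩, p.end_mem_support, rfl⟩, ?_⟩
  · rintro _ ⟨z, hz, rfl⟩
    simp only [Finset.mem_coe]
    exact (mem_K G).2 ⟨by simpa using z.2, hyS, z.2, ⟨p.takeUntil z hz⟩⟩
  · exact (flatten_connected G (p.connected_induce_support)).preconnected _ _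

/-- each component of s minus x contains a vertex adjacent to x -/
lemma adjK {s : Finset V} (hs : (G.induce (↑s : Set V)).Connected)
    {x y : V} (hx : x ∈ s) (hy : y ∈ s.erase x) :
    ∃ y' ∈ K G (s.erase x) y, G.Adj x y' := by
  classical
  set t := s.erase x with ht
  set Gs := G.induce (↑s : Set V) with hGs
  have hxS : x ∈ (↑s : Set V) := by simpa using hx
  set x₀ : ↥(↑s : Set V) := ⟨x, hxS⟩ with hx₀
  -- distance function to x
  set f : V → ℕ := fun z => if h : z ∈ (↑s : Set V) then Gs.dist x₀ ⟨z, h⟩ else 0 with hf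
  obtain ⟨c, hcK, hcmin⟩ := Finset.exists_min_image (K G t y) f ⟨y, mem_K_self G hy⟩
  have hcs : c ∈ s := Finset.erase_subset _ _ (K_subset G hcK)
  have hcS : c ∈ (↑s : Set V) := by simpa using hcs
  set c₀ : ↥(↑s : Set V) := ⟨c, hcS⟩ with hc₀
  have hcx : c ≠ x := (Finset.mem_erase.1 (K_subset G hcK)).1
  have hdpos : Gs.dist x₀ c₀ ≠ 0 := by
    have := hs.pos_dist_of_ne (u := x₀) (v := c₀)
      (by simp only [hx₀, hc₀, ne_eq, Subtype.ext_iff]; exact fun h => hcx h.symm)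
    omega
  obtain ⟨p, hp, hplen⟩ := hs.exists_path_of_dist x₀ c₀
  set q := p.reverse with hq
  have hqnil : ¬ q.Nil := SimpleGraph.Walk.not_nil_of_ne
    (by simp only [hc₀, hx₀, ne_eq, Subtype.ext_iff]; exact hcx)
  set u := q.getVert 1 with hu
  have hadj : Gs.Adj c₀ u := q.adj_snd hqnil
  have hqlen : q.tail.length + 1 = q.length := SimpleGraph.Walk.length_tail_add_one hqnil
  have hdistu : Gs.dist x₀ u ≤ Gs.dist x₀ c₀ - 1 := by
    have h1 : Gs.dist u x₀ ≤ q.tail.length := SimpleGraph.dist_le _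
    have h2 : q.length = Gs.dist x₀ c₀ := by
      rw [hq, SimpleGraph.Walk.length_reverse, hplen]
    rw [SimpleGraph.dist_comm] at h1
    omega
  by_cases hux : u.1 = x
  · refine ⟨c, hcK, ?_⟩
    have h2 : G.Adj (u : V) c := hadj.symm
    rwa [hux] at h2
  · exfalso
    have hus : u.1 ∈ t := Finset.mem_erase.2 ⟨hux, by simpa using u.2⟩
    have huK : u.1 ∈ K G t y := by
      refine (mem_K G).2 ⟨hus, Rch_trans G ((mem_K G).1 hcK).2 (Rch_adj G ?_ hus ?_)⟩
      · exact K_subset G hcK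
      · exact hadj
    have h5 := hcmin u.1 huK
    have h6 : f c = Gs.dist x₀ c₀ := by simp only [hf, hcS, dif_pos]; rfl
    have h7 : f u.1 = Gs.dist x₀ u := by simp only [hf, u.2, dif_pos, Subtype.coe_eta]
    rw [h6, h7] at h5
    omega

/-- generic complement-connectivity via patches anchored at x -/
lemma conn_of_pieces {s : Finset V} {x : V} (hx : x ∈ s) (A : Finset V) (hA : x ∉ A)
    (h : ∀ v ∈ s \ A, v ≠ x → ∃ P : Finset V, v ∈ P ∧ P ⊆ s \ A ∧ x ∈ P ∧
      (G.induce (↑P : Set V)).Connected) :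
    (G.induce (↑(s \ A) : Set V)).Connected := by
  apply SimpleGraph.induce_connected_of_patches x
    (by simp only [Finset.coe_sdiff, Set.mem_diff, Finset.mem_coe]; exact ⟨hx, hA⟩)
  intro v hv
  by_cases hvx : v = x
  · subst hvx
    refine ⟨({v} : Set V), ?_, rfl, rfl, Reachable.refl _⟩
    simp only [Set.singleton_subset_iff, Finset.coe_sdiff, Set.mem_diff, Finset.mem_coe]
    exact ⟨hx, hA⟩
  · obtain ⟨P, hvP, hPsub, hxP, hPconn⟩ := h v (by simpa using hv) hvx
    exact ⟨↑P, by exact_mod_cast hPsub, by simpa using hxP, by simpa using hvP,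
      hPconn.preconnected _ _⟩

/-- removing a set contained in one component keeps the rest connected,
provided either the whole component is removed or what remains of it is
connected and touches x -/
lemma conn_sdiff {s : Finset V} {x : V} (hs : (G.induce (↑s : Set V)).Connected)
    (hx : x ∈ s) {A : Finset V} {y₁ : V} (hy₁ : y₁ ∈ s.erase x)
    (hAC : A ⊆ K G (s.erase x) y₁)
    (hrest : A = K G (s.erase x) y₁ ∨ ∃ y' ∈ K G (s.erase x) y₁ \ A,
      G.Adj x y' ∧ (G.induce (↑(K G (s.erase x) y₁ \ A) : Set V)).Connected) :
    (G.induce (↑(s \ A) : Set V)).Connected := by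
  set t := s.erase x with ht
  set C := K G t y₁ with hC
  have hCt : C ⊆ t := K_subset G
  have hxA : x ∉ A := fun h => (Finset.mem_erase.1 (hCt (hAC h))).1 rfl
  apply conn_of_pieces G hx A hxA
  intro v hv hvx
  obtain ⟨hvs, hvA⟩ := Finset.mem_sdiff.1 hv
  have hvt : v ∈ t := Finset.mem_erase.2 ⟨hvx, hvs⟩
  by_cases hvC : v ∈ C
  · rcases hrest with heq | ⟨y', hy', hadj, hconn⟩
    · exact absurd (heq ▸ hvC) hvA
    · refine ⟨insert x (C \ A), by simp [hvC, hvA], ?_, Finset.mem_insert_self _ _,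
        glue_connected G hy' hadj hconn⟩
      intro w hw
      rcases Finset.mem_insert.1 hw with rfl | hw
      · exact Finset.mem_sdiff.2 ⟨hx, hxA⟩
      · obtain ⟨hw1, hw2⟩ := Finset.mem_sdiff.1 hw
        exact Finset.mem_sdiff.2 ⟨Finset.erase_subset _ _ (hCt hw1), hw2⟩
  · -- v lies in a different component, untouched by A
    have hy₁K : y₁ ∉ K G t v := by
      intro hmem
      have h2 := mem_K_self G hvt
      rw [K_eq_of_mem G hmem] at h2
      exact hvC h2
    have hdisj : Disjoint (K G t v) C := K_disjoint G hy₁K hy₁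
    obtain ⟨y'', hy''K, hy''adj⟩ := adjK G hs hx hvt
    refine ⟨insert x (K G t v), Finset.mem_insert_of_mem (mem_K_self G hvt), ?_,
      Finset.mem_insert_self _ _, glue_connected G hy''K hy''adj (K_connected G hvt)⟩
    intro w hw
    rcases Finset.mem_insert.1 hw with rfl | hw
    · exact Finset.mem_sdiff.2 ⟨hx, hxA⟩
    · refine Finset.mem_sdiff.2 ⟨Finset.erase_subset _ _ (K_subset G hw), fun hwA => ?_⟩
      exact (Finset.disjoint_left.1 hdisj) hw (hAC hwA)

/-- greedy collection of m vertices from small components around x -/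
lemma greedy (r : ℕ) (hr : 1 ≤ r) : ∀ m, ∀ (s : Finset V) (x : V), x ∈ s →
    (G.induce (↑s : Set V)).Connected → m + 1 ≤ s.card →
    (∀ y ∈ s.erase x, (K G (s.erase x) y).card ≤ r - 1) →
    ∃ A ⊆ s.erase x, A.card = m ∧ (∀ a ∈ A, G.dist x a ≤ r - 1) ∧
      (G.induce (↑(s \ A) : Set V)).Connected := by
  intro m
  induction m using Nat.strong_induction_on with
  | _ m ih =>
  intro s x hx hs hm hK
  rcases Nat.eq_zero_or_pos m with rfl | hmpos
  · refine ⟨∅, by simp, by simp, by simp, ?_⟩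
    rw [Finset.sdiff_empty]; exact hs
  set t := s.erase x with ht
  have htcard : t.card = s.card - 1 := Finset.card_erase_of_mem hx
  obtain ⟨y, hy⟩ : t.Nonempty := Finset.card_pos.1 (by omega)
  set C := K G t y with hCdef
  have hCt : C ⊆ t := K_subset G
  have hyC : y ∈ C := mem_K_self G hy
  have hCcard : 1 ≤ C.card := Finset.card_pos.2 ⟨y, hyC⟩
  have hCr : C.card ≤ r - 1 := hK y hy
  have hxC : x ∉ C := fun h => (Finset.mem_erase.1 (hCt h)).1 rfl
  obtain ⟨y', hy'C, hy'adj⟩ := adjK G hs hx hy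
  have hCconn := K_connected G hy
  -- all vertices of C are close to x
  have hdistC : ∀ a ∈ C, G.dist x a ≤ r - 1 := by
    intro a ha
    have hconn' := glue_connected G (C := C) hy'C hy'adj hCconn
    have := dist_add_one_le_card G hconn' (Finset.mem_insert_self x C)
      (Finset.mem_insert_of_mem ha)
    rw [Finset.card_insert_of_notMem hxC] at this
    omega
  by_cases hc : C.card ≤ m
  · -- take the whole component and recurse on the rest
    set s' := s \ C with hs'
    have hxs' : x ∈ s' := Finset.mem_sdiff.2 ⟨hx, hxC⟩
    have hs'conn : (G.induce (↑s' : Set V)).Connected :=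
      conn_sdiff G hs hx hy (subset_refl _) (Or.inl rfl)
    have hs'card : s'.card = s.card - C.card :=
      Finset.card_sdiff_of_subset (hCt.trans (Finset.erase_subset _ _))
    have hs't : s'.erase x ⊆ t := Finset.erase_subset_erase _ (Finset.sdiff_subset)
    obtain ⟨A', hA'sub, hA'card, hA'dist, hA'conn⟩ := ih (m - C.card) (by omega) s' x hxs'
      hs'conn (by omega) (fun z hz => le_trans (Finset.card_le_card
        (fun w hw => K_mono G hs't hw)) (hK z (hs't hz)))
    have hdisjCA' : Disjoint C A' := by
      rw [Finset.disjoint_left]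
      intro w hwC hwA'
      have := hA'sub hwA'
      rw [Finset.mem_erase] at this
      exact (Finset.mem_sdiff.1 this.2).2 hwC
    refine ⟨C ∪ A', ?_, ?_, ?_, ?_⟩
    · exact Finset.union_subset hCt (hA'sub.trans (Finset.erase_subset_erase _
        Finset.sdiff_subset))
    · rw [Finset.card_union_of_disjoint hdisjCA', hA'card]; omega
    · intro a ha
      rcases Finset.mem_union.1 ha with h | h
      · exact hdistC a h
      · exact hA'dist a h
    · have : s \ (C ∪ A') = s' \ A' := by
        ext z
        simp only [Finset.mem_sdiff, Finset.mem_union, hs']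
        tauto
      rw [this]; exact hA'conn
  · -- trim the component
    push_neg at hc
    obtain ⟨D, hDsub, hDcard, hy'D, hDconn⟩ := remove_m G m C hCconn y' hy'C hc
    refine ⟨D, hDsub.trans hCt, hDcard, fun a ha => hdistC a (hDsub ha), ?_⟩
    exact conn_sdiff G hs hx hy hDsub
      (Or.inr ⟨y', Finset.mem_sdiff.2 ⟨hy'C, hy'D⟩, hy'adj, hDconn⟩)

/-- extraction lemma: a set of r vertices clustered around some vertex whose removal
keeps the rest connected (or which is everything) -/
lemma extract (r : ℕ) (hr : 1 ≤ r) : ∀ n, ∀ (s : Finset V), s.card = n →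
    (G.induce (↑s : Set V)).Connected → ∀ x ∈ s, r ≤ s.card →
    ∃ (v : V) (A : Finset V), A ⊆ s ∧ A.card = r ∧ (∀ a ∈ A, G.dist v a ≤ r - 1) ∧
      (A = s ∨ (x ∉ A ∧ (G.induce (↑(s \ A) : Set V)).Connected)) := by
  intro n
  induction n using Nat.strong_induction_on with
  | _ n ih =>
  intro s hn hs x hx hrs
  rcases eq_or_lt_of_le hrs with heq | hlt
  · -- take everything
    refine ⟨x, s, subset_refl _, heq.symm, fun a ha => ?_, Or.inl rfl⟩
    have := dist_add_one_le_card G hs hx ha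
    omega
  set t := s.erase x with ht
  have htcard : t.card = s.card - 1 := Finset.card_erase_of_mem hx
  by_cases hbig : ∃ y ∈ t, r ≤ (K G t y).card
  · obtain ⟨y, hy, hyr⟩ := hbig
    set C := K G t y with hC
    have hCt : C ⊆ t := K_subset G
    obtain ⟨y', hy'C, hy'adj⟩ := adjK G hs hx hy
    obtain ⟨v, A, hAsub, hAcard, hAdist, hAcase⟩ := ih C.card
      (by have := Finset.card_le_card hCt; omega) C rfl (K_connected G hy) y' hy'C hyr
    have hAt : A ⊆ t := hAsub.trans hCt
    have hxA : x ∉ A := fun h => (Finset.mem_erase.1 (hAt h)).1 rfl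
    refine ⟨v, A, hAt.trans (Finset.erase_subset _ _), hAcard, hAdist, Or.inr ⟨hxA, ?_⟩⟩
    rcases hAcase with heq2 | ⟨hy'A, hconn⟩
    · exact conn_sdiff G hs hx hy (heq2 ▸ subset_refl _) (Or.inl heq2)
    · exact conn_sdiff G hs hx hy hAsub
        (Or.inr ⟨y', Finset.mem_sdiff.2 ⟨hy'C, hy'A⟩, hy'adj, hconn⟩)
  · push_neg at hbig
    obtain ⟨A, hAsub, hAcard, hAdist, hAconn⟩ := greedy G r hr r s x hx hs (by omega)
      (fun z hz => by rw [← ht] at hz ⊢; have := hbig z hz; omega)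
    have hxA : x ∉ A := fun h => (Finset.mem_erase.1 (hAsub h)).1 rfl
    exact ⟨x, A, hAsub.trans (Finset.erase_subset _ _), hAcard, hAdist,
      Or.inr ⟨hxA, hAconn⟩⟩

/-- build the partition of s into clusters of size r with pairwise distance ≤ 2r-2 -/
lemma build_parts (r : ℕ) (hr : 2 ≤ r) (hG : G.Connected) : ∀ n, ∀ s : Finset V, s.card = n →
    (s.Nonempty → (G.induce (↑s : Set V)).Connected) → r ∣ s.card →
    ∃ parts : Finset (Finset V), parts.sup id = s ∧
      (↑parts : Set (Finset V)).PairwiseDisjoint id ∧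
      ∀ p ∈ parts, p.card = r ∧ ∀ a ∈ p, ∀ b ∈ p, a ≠ b → G.dist a b ≤ 2 * r - 2 := by
  intro n
  induction n using Nat.strong_induction_on with
  | _ n ih =>
  intro s hn hsconn hdvd
  rcases Finset.eq_empty_or_nonempty s with rfl | hne
  · exact ⟨∅, by simp, by simp, by simp⟩
  have hconn := hsconn hne
  have hcardpos : 0 < s.card := Finset.card_pos.2 hne
  have hrs : r ≤ s.card := Nat.le_of_dvd hcardpos hdvd
  obtain ⟨x, hx⟩ := hne
  obtain ⟨v, A, hAsub, hAcard, hAdist, hAcase⟩ :=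
    extract G r (by omega) s.card s rfl hconn x hx hrs
  have hdistAB : ∀ a ∈ A, ∀ b ∈ A, a ≠ b → G.dist a b ≤ 2 * r - 2 := by
    intro a ha b hb _
    have h1 := hAdist a ha
    have h2 := hAdist b hb
    have h3 : G.dist a b ≤ G.dist a v + G.dist v b := hG.dist_triangle
    rw [SimpleGraph.dist_comm (u := a) (v := v)] at h3
    omega
  rcases hAcase with rfl | ⟨hxA, hconn'⟩
  · refine ⟨{A}, by simp, by simp, ?_⟩
    intro p hp
    rw [Finset.mem_singleton] at hp
    subst hp
    exact ⟨hAcard, hdistAB⟩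
  · set s' := s \ A with hs'
    have hs'card : s'.card = s.card - r := by rw [hs', Finset.card_sdiff_of_subset hAsub, hAcard]
    have hdvd' : r ∣ s'.card := by
      rw [hs'card]
      exact Nat.dvd_sub hdvd dvd_rfl
    obtain ⟨parts', hsup', hdisj', hparts'⟩ := ih s'.card (by omega) s' rfl
      (fun _ => hconn') hdvd'
    have hsub' : ∀ p ∈ parts', p ⊆ s' := by
      intro p hp
      have : p ≤ parts'.sup id := Finset.le_sup (f := id) hp
      rwa [hsup'] at this
    refine ⟨insert A parts', ?_, ?_, ?_⟩
    · rw [Finset.sup_insert, hsup', id]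
      exact Finset.union_sdiff_of_subset hAsub
    · rw [Finset.coe_insert]
      refine hdisj'.insert ?_
      intro p hp _
      rw [Finset.disjoint_left]
      intro w hwA hwp
      exact (Finset.mem_sdiff.1 (hsub' p hp hwp)).2 hwA
    · intro p hp
      rcases Finset.mem_insert.1 hp with rfl | hp
      · exact ⟨hAcard, hdistAB⟩
      · exact hparts' p hp

end Aux

theorem power_has_clique_factor {V : Type*} [Fintype V] [DecidableEq V] (G : SimpleGraph V)
    (r : ℕ) (hr : 2 ≤ r) (hG : G.Connected) (hdvd : r ∣ Fintype.card V) :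
    HasCliqueFactor (gpow G (2 * r - 2)) r := by
  classical
  have hconn : (G.induce (↑(univ : Finset V) : Set V)).Connected := by
    rw [Finset.coe_univ]
    exact ((induceUnivIso G).connected_iff).2 hG
  obtain ⟨parts, hsup, hdisj, hparts⟩ := build_parts G r hr hG (univ : Finset V).card univ rfl
    (fun _ => hconn) (by rw [Finset.card_univ]; exact hdvd)
  refine ⟨Finpartition.ofErase parts (Finset.supIndep_iff_pairwiseDisjoint.2 hdisj) hsup, ?_⟩
  intro p hp
  have hp' : p ∈ parts := Finset.mem_of_mem_erase hp
  obtain ⟨hcard, hdist⟩ := hparts p hp'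
  refine ⟨hcard, ?_⟩
  intro a ha b hb hab
  exact (⟨hab, hdist a (Finset.mem_coe.1 ha) b (Finset.mem_coe.1 hb) hab⟩ : a ≠ b ∧ G.dist a b ≤ 2 * r - 2)
end

section
/- Let G be a connected graph of order n and let n = n_1 + n_2 + ... + n_k be a partition of n into positive integers. Then V(G) can be partitioned into parts A_1, ..., A_k with |A_i| = n_i such that for each i there exists a subtree T_i of G of order at most 2n_i − 1 with A_i ⊆ V(T_i). -/
open SimpleGraph Finset

namespace SubtreeAux

variable {V : Type*}

/-- A BFS/parent structure on a graph rooted at `r`. -/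
structure BFS (G : SimpleGraph V) (r : V) (p : V → V) : Prop where
  root : p r = r
  adj : ∀ v, v ≠ r → G.Adj v (p v)
  dist : ∀ v, v ≠ r → G.dist r (p v) + 1 = G.dist r v

theorem exists_bfs {G : SimpleGraph V} (hG : G.Connected) (r : V) :
    ∃ p : V → V, BFS G r p := by
  have key : ∀ v : V, v ≠ r → ∃ u, G.Adj v u ∧ G.dist r u + 1 = G.dist r v := by
    intro v hv
    have hpos : 0 < G.dist r v := hG.pos_dist_of_ne (Ne.symm hv)
    obtain ⟨w, hw⟩ := hG.exists_walk_length_eq_dist r v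
    have hnil : ¬ w.reverse.Nil := by
      rw [SimpleGraph.Walk.nil_iff_length_eq]
      rw [SimpleGraph.Walk.length_reverse]
      omega
    cases hrev : w.reverse with
    | nil => rw [hrev] at hnil; simp at hnil
    | @cons _ u _ h' q =>
      refine ⟨u, h', ?_⟩
      have hq : q.length = G.dist r v - 1 := by
        have := congrArg SimpleGraph.Walk.length hrev
        rw [SimpleGraph.Walk.length_reverse, hw] at this
        simp at this
        omega
      have h1 : G.dist r u ≤ G.dist r v - 1 := by
        have := SimpleGraph.dist_le q.reverse
        rwa [SimpleGraph.Walk.length_reverse, hq] at this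
      have h2 : G.dist r v ≤ G.dist r u + 1 := by
        obtain ⟨q', hq'⟩ := hG.exists_walk_length_eq_dist r u
        have := SimpleGraph.dist_le (q'.concat h'.symm)
        rwa [SimpleGraph.Walk.length_concat, hq'] at this
      omega
  choose f hf using key
  classical
  refine ⟨fun v => if h : v = r then r else f v h, ?_, ?_, ?_⟩
  · simp
  · intro v hv; simpa [hv] using (hf v hv).1
  · intro v hv; simpa [hv] using (hf v hv).2

variable {G : SimpleGraph V} {r : V} {p : V → V}

theorem BFS.iter_root (h : BFS G r p) : ∀ m, p^[m] r = r := by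
  intro m
  induction m with
  | zero => rfl
  | succ m ih => rw [Function.iterate_succ_apply', ih, h.root]

/-- Induction principle along the parent chain. -/
theorem BFS.rec' (h : BFS G r p) {P : V → Prop} (hr : P r)
    (step : ∀ v, v ≠ r → P (p v) → P v) : ∀ v, P v := by
  have key : ∀ n v, G.dist r v ≤ n → P v := by
    intro n
    induction n with
    | zero =>
      intro v hv
      by_cases hvr : v = r
      · subst hvr; exact hr
      · exact absurd (h.dist v hvr) (by omega)
    | succ n ih =>
      intro v hv
      by_cases hvr : v = r
      · subst hvr; exact hr
      · exact step v hvr (ih _ (by have := h.dist v hvr; omega))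
  exact fun v => key (G.dist r v) v le_rfl

theorem BFS.exists_iter_eq_root (h : BFS G r p) (v : V) : ∃ m, p^[m] v = r := by
  refine h.rec' (P := fun v => ∃ m, p^[m] v = r) ⟨0, rfl⟩ ?_ v
  rintro v hv ⟨m, hm⟩
  exact ⟨m + 1, by rwa [Function.iterate_succ_apply]⟩

theorem BFS.iter_eq_root_of_le (h : BFS G r p) {u : V} {j m : ℕ} (hj : j ≤ m)
    (hr' : p^[j] u = r) : p^[m] u = r := by
  have : p^[m] u = p^[m - j] (p^[j] u) := by
    rw [← Function.iterate_add_apply]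
    congr 1; omega
  rw [this, hr', h.iter_root]

theorem BFS.dist_iter (h : BFS G r p) :
    ∀ m u, (∀ j, j < m → p^[j] u ≠ r) → G.dist r (p^[m] u) + m = G.dist r u := by
  intro m
  induction m with
  | zero => intro u _; simp
  | succ m ih =>
    intro u hu
    rw [Function.iterate_succ_apply']
    have h1 := h.dist (p^[m] u) (hu m (by omega))
    have h2 := ih u (fun j hj => hu j (by omega))
    omega

theorem BFS.loop (h : BFS G r p) {m : ℕ} {v : V} (hm : p^[m] v = v) :
    m = 0 ∨ v = r := by
  by_contra hc
  push_neg at hc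
  obtain ⟨hm0, hvr⟩ := hc
  have hj : ∀ j, j < m → p^[j] v ≠ r := by
    intro j hj hr'
    exact hvr (hm ▸ h.iter_eq_root_of_le (le_of_lt hj) hr')
  have := h.dist_iter m v hj
  rw [hm] at this
  omega

end SubtreeAux


namespace SubtreeAux

set_option linter.unusedSectionVars false

variable {V : Type*} [Fintype V] [DecidableEq V] {G : SimpleGraph V} {r : V} {p : V → V}

open scoped Classical in
/-- The set of vertices below `v` in the parent forest. -/
noncomputable def subF (p : V → V) (v : V) : Finset V :=
  Finset.univ.filter (fun u => ∃ m, p^[m] u = v)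

theorem mem_subF {p : V → V} {v u : V} : u ∈ subF p v ↔ ∃ m, p^[m] u = v := by
  classical
  simp [subF]

theorem self_mem_subF {v : V} : v ∈ subF p v := mem_subF.2 ⟨0, rfl⟩

theorem subF_child_closed {v x : V} (hx : p x ∈ subF p v) : x ∈ subF p v := by
  obtain ⟨m, hm⟩ := mem_subF.1 hx
  exact mem_subF.2 ⟨m + 1, by rwa [Function.iterate_succ_apply]⟩

theorem subF_trans {v w u : V} (h1 : u ∈ subF p w) (h2 : w ∈ subF p v) : u ∈ subF p v := by
  obtain ⟨m1, hm1⟩ := mem_subF.1 h1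
  obtain ⟨m2, hm2⟩ := mem_subF.1 h2
  exact mem_subF.2 ⟨m2 + m1, by rw [Function.iterate_add_apply, hm1, hm2]⟩

theorem BFS.eq_root_of_root_mem (h : BFS G r p) {v : V} (hr : r ∈ subF p v) : v = r := by
  obtain ⟨m, hm⟩ := mem_subF.1 hr
  rw [h.iter_root] at hm
  exact hm.symm

theorem subF_parent_mem {v x : V} (hx : x ∈ subF p v) (hxv : x ≠ v) : p x ∈ subF p v := by
  obtain ⟨m, hm⟩ := mem_subF.1 hx
  cases m with
  | zero => exact absurd hm hxv
  | succ m => exact mem_subF.2 ⟨m, by rwa [Function.iterate_succ_apply] at hm⟩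

theorem BFS.not_parent_in_own_subF (h : BFS G r p) {u v : V} (hm : v ∈ subF p u)
    (hpu : p u = v) (huv : u ≠ v) : False := by
  obtain ⟨m, hmm⟩ := mem_subF.1 hm
  have hloop : p^[m + 1] v = v := by rw [Function.iterate_succ_apply', hmm, hpu]
  rcases h.loop hloop with h0 | hvr
  · omega
  · subst hvr
    rw [h.iter_root] at hmm
    exact huv (hmm ▸ rfl)

/-- The children of `v` in the parent forest. -/
def children (p : V → V) (v : V) : Finset V :=
  Finset.univ.filter (fun u => p u = v ∧ u ≠ v)

theorem mem_children {v u : V} : u ∈ children p v ↔ p u = v ∧ u ≠ v := by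
  simp [children]

theorem BFS.children_ne_root (h : BFS G r p) {v u : V} (hu : u ∈ children p v) : u ≠ r := by
  rintro rfl
  obtain ⟨h1, h2⟩ := mem_children.1 hu
  rw [h.root] at h1
  exact h2 h1

theorem BFS.mem_subF_ne_root (h : BFS G r p) {v u x : V} (hu : u ∈ children p v)
    (hx : x ∈ subF p u) : x ≠ r := by
  rintro rfl
  exact h.children_ne_root hu (h.eq_root_of_root_mem hx)

theorem BFS.dist_children (h : BFS G r p) {v u : V} (hu : u ∈ children p v) :
    G.dist r u = G.dist r v + 1 := by
  obtain ⟨h1, _⟩ := mem_children.1 hu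
  have := h.dist u (h.children_ne_root hu)
  rw [h1] at this
  omega

theorem BFS.subF_decomp (h : BFS G r p) (v : V) :
    subF p v = insert v ((children p v).biUnion (subF p)) := by
  ext x
  simp only [Finset.mem_insert, Finset.mem_biUnion]
  constructor
  · intro hx
    by_cases hxv : x = v
    · exact Or.inl hxv
    · refine Or.inr ?_
      have hex : ∃ m, p^[m] x = v := mem_subF.1 hx
      set m₀ := Nat.find hex with hm₀
      have hspec : p^[m₀] x = v := Nat.find_spec hex
      have hm0 : m₀ ≠ 0 := by
        intro h0
        rw [h0] at hspec
        exact hxv hspec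
      refine ⟨p^[m₀ - 1] x, mem_children.2 ⟨?_, ?_⟩, mem_subF.2 ⟨m₀ - 1, rfl⟩⟩
      · have h' : p^[(m₀ - 1) + 1] x = p (p^[m₀ - 1] x) := Function.iterate_succ_apply' p _ x
        have hm1 : m₀ - 1 + 1 = m₀ := by omega
        rw [← h', hm1]; exact hspec
      · intro heq
        exact Nat.find_min hex (m := m₀ - 1) (by omega) heq
  · rintro (rfl | ⟨u, hu, hx⟩)
    · exact self_mem_subF
    · exact subF_trans hx (mem_subF.2 ⟨1, by simpa using (mem_children.1 hu).1⟩)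

theorem BFS.not_mem_biUnion (h : BFS G r p) (v : V) :
    v ∉ (children p v).biUnion (subF p) := by
  intro hv
  obtain ⟨u, hu, hmem⟩ := Finset.mem_biUnion.1 hv
  obtain ⟨h1, h2⟩ := mem_children.1 hu
  exact h.not_parent_in_own_subF hmem h1 h2

theorem BFS.subF_disjoint (h : BFS G r p) {v u1 u2 : V} (h1 : u1 ∈ children p v)
    (h2 : u2 ∈ children p v) (hne : u1 ≠ u2) : Disjoint (subF p u1) (subF p u2) := by
  rw [Finset.disjoint_left]
  intro x hx1 hx2
  obtain ⟨m1, hm1⟩ := mem_subF.1 hx1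
  obtain ⟨m2, hm2⟩ := mem_subF.1 hx2
  have key : ∀ (u : V) (m : ℕ), u ∈ children p v → p^[m] x = u →
      G.dist r u + m = G.dist r x := by
    intro u m hu hm
    refine hm ▸ h.dist_iter m x ?_
    intro j hj hr'
    exact h.children_ne_root hu (hm ▸ h.iter_eq_root_of_le (le_of_lt hj) hr')
  have k1 := key u1 m1 h1 hm1
  have k2 := key u2 m2 h2 hm2
  rw [h.dist_children h1] at k1
  rw [h.dist_children h2] at k2
  have : m1 = m2 := by omega
  exact hne (by rw [← hm1, this, hm2])

theorem BFS.card_subF (h : BFS G r p) (v : V) :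
    (subF p v).card = 1 + ∑ u ∈ children p v, (subF p u).card := by
  rw [h.subF_decomp v, Finset.card_insert_of_notMem (h.not_mem_biUnion v),
    Finset.card_biUnion (fun u1 h1 u2 h2 hne => h.subF_disjoint h1 h2 hne)]
  omega

theorem BFS.subF_root (h : BFS G r p) : subF p r = Finset.univ := by
  ext x
  simpa [mem_subF] using h.exists_iter_eq_root x

end SubtreeAux


namespace SubtreeAux

set_option linter.unusedSectionVars false
set_option maxHeartbeats 1000000

variable {V : Type*} [Fintype V] [DecidableEq V] {G : SimpleGraph V} {r : V} {p : V → V}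

/-- `B` is anchored at `w`: every non-`w` element has its parent in `B` and is not the root. -/
def Anchored (p : V → V) (r w : V) (B : Finset V) : Prop :=
  w ∈ B ∧ ∀ x ∈ B, x ≠ w → p x ∈ B ∧ x ≠ r

theorem BFS.tree_of_anchored (h : BFS G r p) {w : V} {B : Finset V} (hB : Anchored p r w B) :
    ∃ T : G.Subgraph, T.verts = ↑B ∧ T.coe.IsTree := by
  obtain ⟨hw, hstep⟩ := hB
  set T : G.Subgraph :=
    { verts := ↑B
      Adj := fun x y => x ∈ B ∧ y ∈ B ∧ ((y = p x ∧ x ≠ w) ∨ (x = p y ∧ y ≠ w))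
      adj_sub := by
        rintro x y ⟨hx, hy, (⟨rfl, hxw⟩ | ⟨rfl, hyw⟩)⟩
        · exact h.adj x (hstep x hx hxw).2
        · exact (h.adj y (hstep y hy hyw).2).symm
      edge_vert := fun {x y} hxy => hxy.1
      symm := ⟨fun x y hxy => ⟨hxy.2.1, hxy.1, hxy.2.2.symm⟩⟩ } with hT
  have hTadj : ∀ x y : V, T.Adj x y ↔
      (x ∈ B ∧ y ∈ B ∧ ((y = p x ∧ x ≠ w) ∨ (x = p y ∧ y ≠ w))) := fun x y => Iff.rfl
  have hverts : T.verts = ↑B := rfl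
  -- the anchor as a vertex of T.coe
  have hwv : (w : V) ∈ T.verts := hw
  -- reachability towards the anchor
  have reach : ∀ (a : T.verts), T.coe.Reachable a ⟨w, hwv⟩ := by
    have key : ∀ (n : ℕ) (x : V) (hx : x ∈ T.verts), G.dist r x ≤ n →
        T.coe.Reachable ⟨x, hx⟩ ⟨w, hwv⟩ := by
      intro n
      induction n with
      | zero =>
        intro x hx hd
        by_cases hxw : x = w
        · subst hxw; exact Reachable.refl _
        · exact absurd (h.dist x (hstep x hx hxw).2) (by omega)
      | succ n ih =>
        intro x hx hd
        by_cases hxw : x = w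
        · subst hxw; exact Reachable.refl _
        · obtain ⟨hpx, hxr⟩ := hstep x hx hxw
          have hadj : T.coe.Adj ⟨x, hx⟩ ⟨p x, hpx⟩ := ⟨hx, hpx, Or.inl ⟨rfl, hxw⟩⟩
          have hdist := h.dist x hxr
          exact (hadj.reachable).trans (ih (p x) hpx (by omega))
    intro a
    exact key (G.dist r ↑a) ↑a a.2 le_rfl
  refine ⟨T, rfl, ?_, ?_⟩
  · -- connected
    haveI : Nonempty ↑T.verts := ⟨⟨w, hwv⟩⟩
    exact ⟨fun a b => (reach a).trans (reach b).symm⟩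
  · -- acyclic
    intro x c hc
    -- pick a vertex of maximal distance on the cycle
    obtain ⟨u, humem, hmax⟩ := Finset.exists_max_image c.support.toFinset
      (fun a : T.verts => G.dist r ↑a) ⟨x, by simp [Walk.start_mem_support]⟩
    rw [List.mem_toFinset] at humem
    have hmax' : ∀ a ∈ c.support, G.dist r ↑a ≤ G.dist r ↑u := by
      intro a ha; exact hmax a (List.mem_toFinset.2 ha)
    set c' := c.rotate u humem with hc'def
    have hc' : c'.IsCycle := hc.rotate humem
    have hsub : ∀ a, a ∈ c'.support → a ∈ c.support := by
      intro a ha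
      rw [c'.support_eq_cons] at ha
      rcases List.mem_cons.1 ha with rfl | ha
      · exact humem
      · have hperm := Walk.support_rotate c u humem
        have : a ∈ c.support.tail := hperm.mem_iff.1 ha
        rw [c.support_eq_cons]
        exact List.mem_cons_of_mem _ this
    -- neighbor analysis
    have nbr : ∀ a b : V, T.Adj a b → G.dist r b ≤ G.dist r a → b = p a := by
      rintro a b ⟨ha, hb, (⟨h1, _⟩ | ⟨h1, h2⟩)⟩ hle
      · exact h1
      · exfalso
        have hbr : b ≠ r := (hstep b hb h2).2
        have := h.dist b hbr
        rw [← h1] at this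
        omega
    -- destructure the rotated cycle
    cases hc1 : c' with
    | nil => exact hc'.not_nil (hc1 ▸ Walk.Nil.nil)
    | @cons _ y _ hadj q =>
      have hymem : y ∈ c'.support := by
        rw [hc1]; simp [Walk.support_cons, Walk.start_mem_support]
      have hy : (y : V) = p ↑u := nbr ↑u ↑y hadj (hmax' y (hsub y hymem))
      -- destructure the reverse of the rotated cycle
      cases hc2 : c'.reverse with
      | nil =>
        have hlen0 : c'.length = 0 := by
          have h0 := congrArg Walk.length hc2
          rw [Walk.length_reverse] at h0
          simpa using h0
        have h3 := hc'.three_le_length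
        omega
      | @cons _ z _ hadj2 q2 =>
        have hzmem : z ∈ c'.support := by
          have : z ∈ c'.reverse.support := by
            rw [hc2]; simp [Walk.support_cons, Walk.start_mem_support]
          rwa [Walk.support_reverse, List.mem_reverse] at this
        have hz : (z : V) = p ↑u := nbr ↑u ↑z hadj2 (hmax' z (hsub z hzmem))
        have hyz : y = z := Subtype.ext (hy.trans hz.symm)
        subst hyz
        -- now derive the contradiction via duplicated edge
        have hE1 : c'.edges = s(u, y) :: q.edges := by rw [hc1]; rfl
        have hE2 : c'.edges.reverse = s(u, y) :: q2.edges := by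
          rw [← Walk.edges_reverse, hc2]; rfl
        have hE3 : c'.edges = q2.edges.reverse ++ [s(u, y)] := by
          have := congrArg List.reverse hE2
          rwa [List.reverse_reverse, List.reverse_cons] at this
        have hN : c'.edges.Nodup := hc'.isCircuit.isTrail.edges_nodup
        have hlen : 3 ≤ c'.edges.length := by
          rw [Walk.length_edges]; exact hc'.three_le_length
        have hmem2 : s(u, y) ∈ q.edges := by
          rcases hq2 : q2.edges.reverse with _ | ⟨a, l⟩
          · rw [hq2] at hE3
            rw [hE1] at hE3
            simp at hE3
            exfalso
            have hl1 : c'.edges.length = 1 := by rw [hE1, Walk.edges_eq_nil.mpr hE3]; rfl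
            rw [Walk.length_edges] at hl1
            have h3 := hc'.three_le_length
            omega
          · rw [hq2] at hE3
            rw [hE1] at hE3
            simp at hE3
            rw [hE3.2]
            simp
        rw [hE1, List.nodup_cons] at hN
        exact hN.1 hmem2

end SubtreeAux


namespace SubtreeAux

set_option linter.unusedSectionVars false

variable {V : Type*} [Fintype V] [DecidableEq V] {G : SimpleGraph V} {r : V} {p : V → V}

theorem BFS.compl_connected (h : BFS G r p) {A : Finset V}
    (hclosed : ∀ x : V, p x ∈ A → x ∈ A) (hr : r ∉ A) :
    (G.induce ((↑(Aᶜ) : Finset V) : Set V)).Connected := by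
  set s : Set V := ((↑(Aᶜ) : Finset V) : Set V) with hs
  have hmem : ∀ x : V, x ∈ s ↔ x ∉ A := by
    intro x; simp [hs]
  have hrs : r ∈ s := (hmem r).2 hr
  have reach : ∀ (a : ↥s), (G.induce s).Reachable a ⟨r, hrs⟩ := by
    have key : ∀ (n : ℕ) (x : V) (hx : x ∈ s), G.dist r x ≤ n →
        (G.induce s).Reachable ⟨x, hx⟩ ⟨r, hrs⟩ := by
      intro n
      induction n with
      | zero =>
        intro x hx hd
        by_cases hxr : x = r
        · subst hxr; exact Reachable.refl _
        · exact absurd (h.dist x hxr) (by omega)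
      | succ n ih =>
        intro x hx hd
        by_cases hxr : x = r
        · subst hxr; exact Reachable.refl _
        · have hpx : p x ∈ s := by
            rw [hmem]
            intro hpA
            exact (hmem x).1 hx (hclosed x hpA)
          have hadj : (G.induce s).Adj ⟨x, hx⟩ ⟨p x, hpx⟩ := h.adj x hxr
          have hdist := h.dist x hxr
          exact hadj.reachable.trans (ih (p x) hpx (by omega))
    exact fun a => key (G.dist r ↑a) ↑a a.2 le_rfl
  haveI : Nonempty ↥s := ⟨⟨r, hrs⟩⟩
  exact ⟨fun a b => (reach a).trans (reach b).symm⟩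

theorem greedy (C : Finset V) (c : V → ℕ) :
    ∀ {s : ℕ}, 1 ≤ s → s ≤ ∑ u ∈ C, c u →
    ∃ D ⊆ C, ∃ u0 ∈ C, u0 ∉ D ∧ (∑ u ∈ D, c u) < s ∧ s ≤ c u0 + ∑ u ∈ D, c u := by
  induction C using Finset.induction_on with
  | empty => intro s h1 h2; simp at h2; omega
  | @insert a C' ha IH =>
    intro s h1 h2
    by_cases hcase : s ≤ c a
    · exact ⟨∅, Finset.empty_subset _, a, Finset.mem_insert_self _ _,
        Finset.notMem_empty _, by simp; omega, by simpa using hcase⟩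
    · push_neg at hcase
      rw [Finset.sum_insert ha] at h2
      obtain ⟨D', hD'sub, u0, hu0, hu0n, hlt, hge⟩ :=
        IH (s := s - c a) (by omega) (by omega)
      have haD' : a ∉ D' := fun hmem => ha (hD'sub hmem)
      refine ⟨insert a D', Finset.insert_subset_insert _ hD'sub, u0,
        Finset.mem_insert_of_mem hu0, ?_, ?_, ?_⟩
      · intro hmem
        rcases Finset.mem_insert.1 hmem with rfl | hmem
        · exact ha hu0
        · exact hu0n hmem
      · rw [Finset.sum_insert haD']; omega
      · rw [Finset.sum_insert haD']; omega

theorem BFS.trim (h : BFS G r p) :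
    ∀ (t : ℕ) (S : Finset V), (∀ x, p x ∈ S → x ∈ S) → t ≤ S.card →
    ∃ A ⊆ S, A.card = t ∧ (∀ x, p x ∈ A → x ∈ A) := by
  intro t
  induction t with
  | zero => exact fun S _ _ => ⟨∅, Finset.empty_subset _, rfl, by simp⟩
  | succ t IH =>
    intro S hS ht
    obtain ⟨A', hA'sub, hA'card, hA'closed⟩ := IH S hS (by omega)
    have hne : (S \ A').Nonempty := by
      rw [← Finset.card_pos, Finset.card_sdiff_of_subset hA'sub]
      omega
    obtain ⟨x, hxmem, hxmax⟩ := Finset.exists_max_image (S \ A') (G.dist r) hne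
    rw [Finset.mem_sdiff] at hxmem
    refine ⟨insert x A', Finset.insert_subset hxmem.1 hA'sub,
      by rw [Finset.card_insert_of_notMem hxmem.2, hA'card], ?_⟩
    intro y hy
    rcases Finset.mem_insert.1 hy with hpy | hpy
    · -- p y = x
      by_cases hyA : y ∈ A'
      · exact Finset.mem_insert_of_mem hyA
      · have hyS : y ∈ S := hS y (by rw [hpy]; exact hxmem.1)
        by_cases hyr : y = r
        · have : x = y := by rw [← hpy, hyr, h.root]
          rw [this]
          exact Finset.mem_insert_self _ _
        · have hd := h.dist y hyr
          rw [hpy] at hd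
          exact absurd (hxmax y (Finset.mem_sdiff.2 ⟨hyS, hyA⟩)) (by omega)
    · exact Finset.mem_insert_of_mem (hA'closed y hpy)

end SubtreeAux


namespace SubtreeAux

set_option linter.unusedSectionVars false

variable {V : Type*} [Fintype V] [DecidableEq V] {G : SimpleGraph V} {r : V} {p : V → V}

theorem BFS.subF_anchored (h : BFS G r p) (v : V) : Anchored p r v (subF p v) := by
  refine ⟨self_mem_subF, fun x hx hxv => ⟨subF_parent_mem hx hxv, ?_⟩⟩
  rintro rfl
  exact hxv (h.eq_root_of_root_mem hx).symm

theorem peel (G : SimpleGraph V) (hG : G.Connected) {s : ℕ} (h1 : 1 ≤ s)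
    (h2 : s ≤ Fintype.card V) :
    ∃ A : Finset V, A.card = s ∧ InSubtree G ↑A (2 * s - 1) ∧
      (A = Finset.univ ∨ (G.induce ((↑(Aᶜ) : Finset V) : Set V)).Connected) := by
  obtain ⟨r⟩ := hG.nonempty
  obtain ⟨p, h⟩ := exists_bfs hG r
  set cand : Finset V := Finset.univ.filter (fun v => s ≤ (subF p v).card) with hcand
  have hrc : r ∈ cand := by
    rw [hcand, Finset.mem_filter, h.subF_root, Finset.card_univ]
    exact ⟨Finset.mem_univ r, h2⟩
  obtain ⟨v, hv, hvmax⟩ := Finset.exists_max_image cand (G.dist r) ⟨r, hrc⟩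
  have hvcard : s ≤ (subF p v).card := (Finset.mem_filter.1 hv).2
  have hchild : ∀ u ∈ children p v, (subF p u).card < s := by
    intro u hu
    by_contra hcon
    push_neg at hcon
    have hu' : u ∈ cand := by
      rw [hcand, Finset.mem_filter]; exact ⟨Finset.mem_univ u, hcon⟩
    have := hvmax u hu'
    have := h.dist_children hu
    omega
  by_cases hcase : (subF p v).card = s
  · -- the subtree at v has exactly the right size
    obtain ⟨T, hTverts, hTtree⟩ := h.tree_of_anchored (h.subF_anchored v)
    refine ⟨subF p v, hcase, ⟨T, hTtree, by rw [hTverts], ?_⟩, ?_⟩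
    · rw [hTverts, Set.ncard_coe_finset, hcase]; omega
    · by_cases hA : subF p v = Finset.univ
      · exact Or.inl hA
      · refine Or.inr (h.compl_connected (fun x => subF_child_closed) ?_)
        intro hrA
        exact hA (by rw [h.eq_root_of_root_mem hrA] at *; exact h.subF_root)
  · -- greedy selection among children
    have hlt : s < (subF p v).card := lt_of_le_of_ne hvcard (Ne.symm hcase)
    have hsum : (subF p v).card = 1 + ∑ u ∈ children p v, (subF p u).card := h.card_subF v
    obtain ⟨D, hDsub, u0, hu0, hu0D, hlt2, hge2⟩ :=
      greedy (children p v) (fun u => (subF p u).card) h1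
        (by show s ≤ ∑ u ∈ children p v, (subF p u).card; omega)
    replace hlt2 : (∑ u ∈ D, (subF p u).card) < s := hlt2
    replace hge2 : s ≤ (subF p u0).card + ∑ u ∈ D, (subF p u).card := hge2
    set t := s - ∑ u ∈ D, (subF p u).card with ht
    obtain ⟨A0, hA0sub, hA0card, hA0closed⟩ :=
      h.trim t (subF p u0) (fun x => subF_child_closed) (by omega)
    set A : Finset V := A0 ∪ D.biUnion (subF p) with hA
    have hdisj : Disjoint A0 (D.biUnion (subF p)) := by
      rw [Finset.disjoint_left]
      intro x hx1 hx2
      obtain ⟨u, hu, hxu⟩ := Finset.mem_biUnion.1 hx2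
      have hne : u0 ≠ u := fun he => hu0D (he ▸ hu)
      exact (Finset.disjoint_left.1 (h.subF_disjoint hu0 (hDsub hu) hne)) (hA0sub hx1) hxu
    have hcardA : A.card = s := by
      rw [hA, Finset.card_union_of_disjoint hdisj, hA0card,
        Finset.card_biUnion (fun a ha b hb hne => h.subF_disjoint (hDsub ha) (hDsub hb) hne)]
      omega
    have hclosedA : ∀ x, p x ∈ A → x ∈ A := by
      intro x hx
      rcases Finset.mem_union.1 hx with hx | hx
      · exact Finset.mem_union_left _ (hA0closed x hx)
      · obtain ⟨u, hu, hxu⟩ := Finset.mem_biUnion.1 hx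
        exact Finset.mem_union_right _
          (Finset.mem_biUnion.2 ⟨u, hu, subF_child_closed hxu⟩)
    have hrA : r ∉ A := by
      intro hrA
      rcases Finset.mem_union.1 hrA with hx | hx
      · exact h.mem_subF_ne_root hu0 (hA0sub hx) rfl
      · obtain ⟨u, hu, hxu⟩ := Finset.mem_biUnion.1 hx
        exact h.mem_subF_ne_root (hDsub hu) hxu rfl
    -- the enclosing tree
    set B : Finset V := insert v ((insert u0 D).biUnion (subF p)) with hB
    have hanch : Anchored p r v B := by
      refine ⟨Finset.mem_insert_self _ _, ?_⟩
      intro x hx hxv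
      rcases Finset.mem_insert.1 hx with rfl | hx
      · exact absurd rfl hxv
      obtain ⟨u, hu, hxu⟩ := Finset.mem_biUnion.1 hx
      have huc : u ∈ children p v := by
        rcases Finset.mem_insert.1 hu with rfl | hu
        · exact hu0
        · exact hDsub hu
      constructor
      · by_cases hxu' : x = u
        · subst hxu'
          rw [(mem_children.1 huc).1]
          exact Finset.mem_insert_self _ _
        · exact Finset.mem_insert_of_mem
            (Finset.mem_biUnion.2 ⟨u, hu, subF_parent_mem hxu hxu'⟩)
      · exact h.mem_subF_ne_root huc hxu
    obtain ⟨T, hTverts, hTtree⟩ := h.tree_of_anchored hanch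
    have hAB : A ⊆ B := by
      intro x hx
      rcases Finset.mem_union.1 hx with hx | hx
      · exact Finset.mem_insert_of_mem
          (Finset.mem_biUnion.2 ⟨u0, Finset.mem_insert_self _ _, hA0sub hx⟩)
      · obtain ⟨u, hu, hxu⟩ := Finset.mem_biUnion.1 hx
        exact Finset.mem_insert_of_mem
          (Finset.mem_biUnion.2 ⟨u, Finset.mem_insert_of_mem hu, hxu⟩)
    have hcardB : B.card ≤ 2 * s - 1 := by
      have e1 : B.card ≤ ((insert u0 D).biUnion (subF p)).card + 1 :=
        Finset.card_insert_le _ _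
      have e2 : ((insert u0 D).biUnion (subF p)).card ≤
          ∑ u ∈ insert u0 D, (subF p u).card := Finset.card_biUnion_le
      rw [Finset.sum_insert hu0D] at e2
      have e3 : (subF p u0).card < s := hchild u0 hu0
      omega
    refine ⟨A, hcardA, ⟨T, hTtree, ?_, ?_⟩, Or.inr (h.compl_connected hclosedA hrA)⟩
    · rw [hTverts]
      exact_mod_cast hAB
    · rw [hTverts, Set.ncard_coe_finset]
      exact hcardB

end SubtreeAux


namespace SubtreeAux

set_option linter.unusedSectionVars false

theorem lift_subtree {V : Type*} (G : SimpleGraph V) (s : Set V) (A : Set ↥s) (m : ℕ)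
    (h : InSubtree (G.induce s) A m) : InSubtree G (Subtype.val '' A) m := by
  obtain ⟨T', htree, hsub, hcard⟩ := h
  obtain ⟨hconn, hacyc⟩ := htree
  set T : G.Subgraph :=
    { verts := Subtype.val '' T'.verts
      Adj := fun x y => ∃ (hx : x ∈ s) (hy : y ∈ s), T'.Adj ⟨x, hx⟩ ⟨y, hy⟩
      adj_sub := by
        rintro x y ⟨hx, hy, hadj⟩
        exact T'.adj_sub hadj
      edge_vert := by
        rintro x y ⟨hx, hy, hadj⟩
        exact ⟨⟨x, hx⟩, T'.edge_vert hadj, rfl⟩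
      symm := by
        constructor
        rintro x y ⟨hx, hy, hadj⟩
        exact ⟨hy, hx, hadj.symm⟩ } with hT
  have e : T'.coe ≃g T.coe := by
    refine ⟨⟨fun a => ⟨↑↑a, ⟨↑a, a.2, rfl⟩⟩, fun b => ⟨⟨↑b, ?_⟩, ?_⟩, ?_, ?_⟩, ?_⟩
    · obtain ⟨a, ha, he⟩ := b.2
      exact he ▸ a.2
    · obtain ⟨a, ha, he⟩ := b.2
      have : a = ⟨↑b, he ▸ a.2⟩ := Subtype.ext he
      exact this ▸ ha
    · intro a; exact Subtype.ext (Subtype.ext rfl)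
    · intro b; exact Subtype.ext rfl
    · intro a b
      constructor
      · rintro ⟨hx, hy, hadj⟩
        exact hadj
      · intro hadj
        exact ⟨(↑a : ↥s).2, (↑b : ↥s).2, hadj⟩
  refine ⟨T, ⟨?_, ?_⟩, ?_, ?_⟩
  · exact (Iso.connected_iff e).1 hconn
  · intro x c hc
    have hinj : Function.Injective e.symm.toHom := e.symm.toEquiv.injective
    have hc' := (Walk.map_isCycle_iff_of_injective hinj).2 hc
    exact hacyc _ hc'
  · exact Set.image_mono hsub
  · rw [hT]
    show (Subtype.val '' T'.verts).ncard ≤ m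
    rwa [Set.ncard_image_of_injective _ Subtype.val_injective]

end SubtreeAux


namespace SubtreeAux

set_option linter.unusedSectionVars false

universe u

theorem aux : ∀ (k : ℕ) (V : Type u) [Fintype V] [DecidableEq V] (G : SimpleGraph V),
    G.Connected → ∀ n : Fin k → ℕ, (∀ i, 0 < n i) → ∑ i, n i = Fintype.card V →
    ∃ A : Fin k → Finset V,
      (∀ i j, i ≠ j → Disjoint (A i) (A j)) ∧ (∀ v : V, ∃ i, v ∈ A i) ∧
      ∀ i, (A i).card = n i ∧ InSubtree G (↑(A i)) (2 * n i - 1) := by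
  intro k
  induction k with
  | zero =>
    intro V _ _ G hG n hpos hsum
    exfalso
    obtain ⟨v⟩ := hG.nonempty
    simp only [Finset.univ_eq_empty, Finset.sum_empty] at hsum
    rw [eq_comm, Fintype.card_eq_zero_iff] at hsum
    exact hsum.false v
  | succ k IH =>
    intro V _ _ G hG n hpos hsum
    have h1 : 1 ≤ n 0 := hpos 0
    rw [Fin.sum_univ_succ] at hsum
    have h2 : n 0 ≤ Fintype.card V := by omega
    obtain ⟨A₀, hA₀card, hA₀tree, hA₀alt⟩ := peel G hG h1 h2
    by_cases hk : k = 0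
    · subst hk
      have hsum0 : (∑ i : Fin 0, n i.succ) = 0 := by simp
      have huniv : A₀ = Finset.univ := by
        apply Finset.eq_univ_of_card
        rw [hA₀card]
        omega
      refine ⟨fun _ => A₀, ?_, ?_, ?_⟩
      · intro i j hij
        exfalso
        apply hij
        apply Fin.ext
        have hi := i.isLt
        have hj := j.isLt
        omega
      · intro v
        exact ⟨0, huniv ▸ Finset.mem_univ v⟩
      · intro i
        have hi : i = 0 := Fin.ext (by have := i.isLt; omega)
        subst hi
        exact ⟨hA₀card, hA₀tree⟩
    · have hkpos : 0 < k := Nat.pos_of_ne_zero hk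
      haveI : NeZero k := ⟨hk⟩
      have hsum2 : 1 ≤ ∑ i : Fin k, n i.succ := by
        calc 1 ≤ n ((0 : Fin k)).succ := hpos _
        _ ≤ ∑ i : Fin k, n i.succ :=
          Finset.single_le_sum (f := fun i : Fin k => n i.succ)
            (fun i _ => Nat.zero_le _) (Finset.mem_univ _)
      have hA₀ne : A₀ ≠ Finset.univ := by
        intro he
        rw [he, Finset.card_univ] at hA₀card
        omega
      have hconn' := hA₀alt.resolve_left hA₀ne
      set C : Finset V := A₀ᶜ with hC
      have hcardC : Fintype.card ↥((↑C : Finset V) : Set V) = ∑ i : Fin k, n i.succ := by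
        rw [← Set.toFinset_card, Finset.toFinset_coe, hC, Finset.card_compl]
        omega
      obtain ⟨A', hdisj', hcover', hprops'⟩ :=
        IH ↥((↑C : Finset V) : Set V) (G.induce _) hconn' (fun i => n i.succ)
          (fun i => hpos i.succ) (by rw [hcardC])
      set emb : ↥((↑C : Finset V) : Set V) ↪ V := ⟨Subtype.val, Subtype.val_injective⟩ with hemb
      set A : Fin (k+1) → Finset V := Fin.cases A₀ (fun i => (A' i).map emb) with hAdef
      have hA0 : A 0 = A₀ := rfl
      have hAsucc : ∀ i : Fin k, A i.succ = (A' i).map emb := fun i => by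
        rw [hAdef]; simp
      have hsubC : ∀ i : Fin k, A i.succ ⊆ C := by
        intro i x hx
        rw [hAsucc] at hx
        obtain ⟨a, ha, rfl⟩ := Finset.mem_map.1 hx
        exact a.2
      have hdisj0 : ∀ j : Fin k, Disjoint A₀ (A j.succ) := by
        intro j
        rw [Finset.disjoint_left]
        intro x hx1 hx2
        have := hsubC j hx2
        rw [hC, Finset.mem_compl] at this
        exact this hx1
      refine ⟨A, ?_, ?_, ?_⟩
      · intro i j hij
        induction i using Fin.cases with
        | zero =>
          induction j using Fin.cases with
          | zero => exact absurd rfl hij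
          | succ j => exact hdisj0 j
        | succ i =>
          induction j using Fin.cases with
          | zero => exact (hdisj0 i).symm
          | succ j =>
            rw [hAsucc, hAsucc, Finset.disjoint_map]
            exact hdisj' i j (fun he => hij (he ▸ rfl))
      · intro v
        by_cases hv : v ∈ A₀
        · exact ⟨0, hv⟩
        · have hvC : v ∈ ((↑C : Finset V) : Set V) := by
            rw [Finset.mem_coe, hC, Finset.mem_compl]
            exact hv
          obtain ⟨i, hi⟩ := hcover' ⟨v, hvC⟩
          refine ⟨i.succ, ?_⟩
          rw [hAsucc]
          exact Finset.mem_map.2 ⟨⟨v, hvC⟩, hi, rfl⟩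
      · intro i
        induction i using Fin.cases with
        | zero => exact ⟨hA₀card, hA₀tree⟩
        | succ i =>
          obtain ⟨hcard', htree'⟩ := hprops' i
          constructor
          · rw [hAsucc, Finset.card_map, hcard']
          · have hl : InSubtree G (Subtype.val '' (↑(A' i) : Set ↥((↑C : Finset V) : Set V))) (2 * n i.succ - 1) := by
              apply lift_subtree
              exact htree'
            have : (↑(A i.succ) : Set V) = Subtype.val '' (↑(A' i) : Set ↥((↑C : Finset V) : Set V)) := by
              rw [hAsucc]
              simp [hemb]
            rwa [this]

end SubtreeAux


theorem connected_partition_into_subtrees {V : Type*} [Fintype V] [DecidableEq V]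
    (G : SimpleGraph V) (hG : G.Connected) (k : ℕ) (n : Fin k → ℕ)
    (hpos : ∀ i, 0 < n i) (hsum : ∑ i, n i = Fintype.card V) :
    ∃ A : Fin k → Finset V,
      (∀ i j, i ≠ j → Disjoint (A i) (A j)) ∧ (∀ v : V, ∃ i, v ∈ A i) ∧
      ∀ i, (A i).card = n i ∧ InSubtree G (↑(A i)) (2 * n i - 1) := by
  exact SubtreeAux.aux k V G hG n hpos hsum
end

section
/- Let r ≥ 2 and let T be the tree obtained from the star K_{1,r+1} by subdividing each edge exactly r−2 times. Then T has r^2 vertices, r divides its order, and T^{2r-3} does not contain a K_r-factor. -/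
open SimpleGraph Finset

/-- The tree obtained from the star `K_{1,r+1}` by subdividing each edge `r-2` times:
`none` is the center, and `some (i, j)` is the vertex on the `i`-th leg at distance
`j+1` from the center. -/
def starSubdiv (r : ℕ) : SimpleGraph (Option (Fin (r + 1) × Fin (r - 1))) :=
  SimpleGraph.fromRel (fun a b =>
    match a, b with
    | none, some (_, j) => (j : ℕ) = 0
    | some (i, j), some (i', j') => i = i' ∧ (j' : ℕ) = (j : ℕ) + 1
    | _, _ => False)

lemma abs_sub_le_walk {V : Type*} (G : SimpleGraph V) (f : V → ℤ)
    (hf : ∀ u v, G.Adj u v → |f u - f v| ≤ 1) :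
    ∀ {u v : V} (p : G.Walk u v), |f u - f v| ≤ p.length := by
  intro u v p
  induction p with
  | nil => simp
  | @cons a b c h q ih =>
      rw [Walk.length_cons]
      calc |f a - f c| ≤ |f a - f b| + |f b - f c| := abs_sub_le _ _ _
        _ ≤ 1 + q.length := add_le_add (hf _ _ h) ih
        _ = ((q.length + 1 : ℕ) : ℤ) := by push_cast; ring

lemma dist_lb {V : Type*} (G : SimpleGraph V) (f : V → ℤ)
    (hf : ∀ u v, G.Adj u v → |f u - f v| ≤ 1) {u v : V} (h : G.Reachable u v) :
    |f u - f v| ≤ G.dist u v := by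
  obtain ⟨p, hp⟩ := h.exists_walk_length_eq_dist
  rw [← hp]; exact abs_sub_le_walk G f hf p

lemma reach_center (r : ℕ) (i : Fin (r+1)) :
    ∀ (j : ℕ) (hj : j < r - 1), (starSubdiv r).Reachable (some (i, ⟨j, hj⟩)) none := by
  intro j
  induction j with
  | zero =>
      intro hj
      apply Adj.reachable
      rw [starSubdiv, fromRel_adj]
      exact ⟨by simp, Or.inr rfl⟩
  | succ k ih =>
      intro hj
      have h1 : (starSubdiv r).Adj (some (i, ⟨k+1, hj⟩)) (some (i, ⟨k, by omega⟩)) := by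
        rw [starSubdiv, fromRel_adj]
        exact ⟨by simp [Fin.ext_iff], Or.inr ⟨rfl, rfl⟩⟩
      exact h1.reachable.trans (ih (by omega))

def legF (r : ℕ) (i i' : Fin (r+1)) : Option (Fin (r + 1) × Fin (r - 1)) → ℤ
  | none => 0
  | some (a, j) => if a = i then (j : ℤ) + 1 else if a = i' then -((j : ℤ) + 1) else 0

lemma legF_lip (r : ℕ) (i i' : Fin (r+1)) :
    ∀ u v, (starSubdiv r).Adj u v → |legF r i i' u - legF r i i' v| ≤ 1 := by
  intro u v h
  rw [starSubdiv, fromRel_adj] at h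
  obtain ⟨hne, h⟩ := h
  rcases u with _ | ⟨a, j⟩ <;> rcases v with _ | ⟨b, k⟩
  · exact absurd rfl hne
  · have hk : (k : ℕ) = 0 := by simpa using h
    simp only [legF]
    split_ifs <;> (rw [abs_le]; omega)
  · have hj : (j : ℕ) = 0 := by simpa using h
    simp only [legF]
    split_ifs <;> (rw [abs_le]; omega)
  · simp only at h
    rcases h with ⟨rfl, hk⟩ | ⟨rfl, hj⟩ <;>
      · simp only [legF]
        split_ifs <;> (rw [abs_le]; omega)

theorem starSubdiv_no_clique_factor (r : ℕ) (hr : 2 ≤ r) :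
    Fintype.card (Option (Fin (r + 1) × Fin (r - 1))) = r ^ 2 ∧
    r ∣ Fintype.card (Option (Fin (r + 1) × Fin (r - 1))) ∧
    ¬ HasCliqueFactor (gpow (starSubdiv r) (2 * r - 3)) r := by
  have hcard : Fintype.card (Option (Fin (r + 1) × Fin (r - 1))) = r ^ 2 := by
    obtain ⟨s, rfl⟩ : ∃ s, r = s + 2 := ⟨r - 2, by omega⟩
    simp [Fintype.card_option, Fintype.card_prod]
    ring
  refine ⟨hcard, hcard ▸ dvd_pow_self r two_ne_zero, ?_⟩
  rintro ⟨P, hP⟩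
  -- number of parts is r
  have hpc : P.parts.card * r = r ^ 2 := by
    rw [← Finset.sum_const_nat (m := r) (fun p hp => (hP p hp).1), P.sum_card_parts,
      card_univ, hcard]
  have hpr : P.parts.card = r := by
    have h2 : r ^ 2 = r * r := sq r
    have : P.parts.card * r = r * r := by omega
    exact Nat.eq_of_mul_eq_mul_right (by omega) this
  -- the leaves
  have hlt : r - 2 < r - 1 := by omega
  set L : Fin (r + 1) → Option (Fin (r + 1) × Fin (r - 1)) :=
    fun i => some (i, ⟨r - 2, hlt⟩) with hL
  have hg : ∀ i : Fin (r + 1), ∃ p ∈ P.parts, L i ∈ p := fun i => P.exists_mem (mem_univ _)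
  choose g hg1 hg2 using hg
  have : ¬ Function.Injective g := by
    intro hinj
    have := Fintype.card_le_of_injective
      (fun i : Fin (r + 1) => (⟨g i, hg1 i⟩ : {p // p ∈ P.parts}))
      (fun a b hab => hinj (by simpa using hab))
    simp [Fintype.card_coe, hpr] at this
  rw [Function.not_injective_iff] at this
  obtain ⟨i, i', hgii, hii⟩ := this
  have hLne : L i ≠ L i' := by simp [hL, hii]
  have hadj : (gpow (starSubdiv r) (2 * r - 3)).Adj (L i) (L i') :=
    (hP (g i) (hg1 i)).2 (by exact_mod_cast hg2 i) (by rw [hgii]; exact_mod_cast hg2 i') hLne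
  have hdist : (starSubdiv r).dist (L i) (L i') ≤ 2 * r - 3 := hadj.2
  -- but the distance is at least 2r-2
  have hreach : (starSubdiv r).Reachable (L i) (L i') :=
    (reach_center r i (r - 2) hlt).trans (reach_center r i' (r - 2) hlt).symm
  have hlb := dist_lb (starSubdiv r) (legF r i i') (legF_lip r i i') hreach
  have hfi : legF r i i' (L i) = (r : ℤ) - 1 := by
    simp [legF, hL]
    push_cast [Nat.cast_sub (by omega : 2 ≤ r)]
    ring
  have hfi' : legF r i i' (L i') = -((r : ℤ) - 1) := by
    simp [legF, hL, hii.symm]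
    push_cast [Nat.cast_sub (by omega : 2 ≤ r)]
    ring
  rw [hfi, hfi'] at hlb
  have habs : |(r : ℤ) - 1 - -((r : ℤ) - 1)| = 2 * r - 2 := by
    rw [abs_of_nonneg (by omega)]; ring
  rw [habs] at hlb
  omega
end

section
/- Let r ≥ 2 be even and let G consist of two vertices u, v joined by r+2 internally disjoint paths of length r. Then G is 2-connected with r^2 + r vertices, the r+2 path-centers are pairwise at distance exactly r in G, and G^{r-1} contains no K_r-factor. -/
open SimpleGraph Finset

/-- The graph consisting of two vertices `u = Sum.inl ()` and `v = Sum.inr (Sum.inl ())`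
joined by `r+2` internally disjoint paths of length `r`; `Sum.inr (Sum.inr (i, j))` is
the internal vertex of the `i`-th path at distance `j+1` from `u`. -/
def thetaGraph (r : ℕ) : SimpleGraph (Unit ⊕ Unit ⊕ (Fin (r + 2) × Fin (r - 1))) :=
  SimpleGraph.fromRel (fun a b =>
    match a, b with
    | Sum.inl _, Sum.inr (Sum.inr (_, j)) => (j : ℕ) = 0
    | Sum.inr (Sum.inl _), Sum.inr (Sum.inr (_, j)) => (j : ℕ) = r - 2
    | Sum.inr (Sum.inr (i, j)), Sum.inr (Sum.inr (i', j')) =>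
        i = i' ∧ (j' : ℕ) = (j : ℕ) + 1
    | _, _ => False)


open SimpleGraph Finset

lemma theta_adj_u (r : ℕ) (i : Fin (r+2)) (j : Fin (r-1)) (hj : (j:ℕ) = 0) :
    (thetaGraph r).Adj (Sum.inl ()) (Sum.inr (Sum.inr (i,j))) := by
  rw [thetaGraph, SimpleGraph.fromRel_adj]
  exact ⟨by simp, Or.inl hj⟩

lemma theta_adj_v (r : ℕ) (i : Fin (r+2)) (j : Fin (r-1)) (hj : (j:ℕ) = r - 2) :
    (thetaGraph r).Adj (Sum.inr (Sum.inl ())) (Sum.inr (Sum.inr (i,j))) := by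
  rw [thetaGraph, SimpleGraph.fromRel_adj]
  exact ⟨by simp, Or.inl hj⟩

lemma theta_adj_step (r : ℕ) (i : Fin (r+2)) (j j' : Fin (r-1)) (hj : (j':ℕ) = (j:ℕ) + 1) :
    (thetaGraph r).Adj (Sum.inr (Sum.inr (i,j))) (Sum.inr (Sum.inr (i,j'))) := by
  rw [thetaGraph, SimpleGraph.fromRel_adj]
  refine ⟨by simp; omega, Or.inl ⟨rfl, hj⟩⟩
lemma theta_adj_cases {r : ℕ} {a b : Unit ⊕ Unit ⊕ (Fin (r + 2) × Fin (r - 1))}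
    (h : (thetaGraph r).Adj a b) :
    (∃ (i : Fin (r+2)) (j : Fin (r-1)), ((j:ℕ) = 0) ∧ ((a = Sum.inl () ∧ b = Sum.inr (Sum.inr (i,j))) ∨ (b = Sum.inl () ∧ a = Sum.inr (Sum.inr (i,j))))) ∨
    (∃ (i : Fin (r+2)) (j : Fin (r-1)), ((j:ℕ) = r - 2) ∧ ((a = Sum.inr (Sum.inl ()) ∧ b = Sum.inr (Sum.inr (i,j))) ∨ (b = Sum.inr (Sum.inl ()) ∧ a = Sum.inr (Sum.inr (i,j))))) ∨
    (∃ (i : Fin (r+2)) (j j' : Fin (r-1)), ((j':ℕ) = (j:ℕ) + 1) ∧ ((a = Sum.inr (Sum.inr (i,j)) ∧ b = Sum.inr (Sum.inr (i,j'))) ∨ (b = Sum.inr (Sum.inr (i,j)) ∧ a = Sum.inr (Sum.inr (i,j'))))) := by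
  rw [thetaGraph, SimpleGraph.fromRel_adj] at h
  obtain ⟨hne, h | h⟩ := h <;>
    rcases a with _ | _ | ⟨i, j⟩ <;> rcases b with _ | _ | ⟨i', j'⟩ <;> simp_all
  · exact ⟨i', j, j', h.2, Or.inl ⟨⟨rfl, rfl⟩, rfl, rfl⟩⟩
  · exact ⟨i, j', j, h.2, Or.inr ⟨⟨rfl, rfl⟩, rfl, rfl⟩⟩
def walkUpTo (r : ℕ) (i : Fin (r+2)) :
    (j : ℕ) → (hj : j < r - 1) →
      (thetaGraph r).Walk (Sum.inl ()) (Sum.inr (Sum.inr (i, ⟨j, hj⟩)))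
  | 0, hj => SimpleGraph.Walk.cons (theta_adj_u r i ⟨0, hj⟩ rfl) SimpleGraph.Walk.nil
  | j+1, hj => (walkUpTo r i j (by omega)).concat
      (theta_adj_step r i ⟨j, by omega⟩ ⟨j+1, hj⟩ rfl)

lemma walkUpTo_length (r : ℕ) (i : Fin (r+2)) :
    ∀ (j : ℕ) (hj : j < r - 1), (walkUpTo r i j hj).length = j + 1
  | 0, hj => by simp [walkUpTo]
  | j+1, hj => by
      rw [walkUpTo, SimpleGraph.Walk.length_concat, walkUpTo_length r i j]

lemma walkUpTo_support (r : ℕ) (i : Fin (r+2)) :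
    ∀ (j : ℕ) (hj : j < r - 1), ∀ z ∈ (walkUpTo r i j hj).support,
      z = Sum.inl () ∨ ∃ (j' : Fin (r-1)), (j':ℕ) ≤ j ∧ z = Sum.inr (Sum.inr (i, j'))
  | 0, hj => by
      intro z hz
      simp [walkUpTo] at hz
      rcases hz with rfl | rfl
      · exact Or.inl rfl
      · exact Or.inr ⟨⟨0, hj⟩, le_refl _, rfl⟩
  | j+1, hj => by
      intro z hz
      rw [walkUpTo, SimpleGraph.Walk.support_concat] at hz
      simp only [List.concat_eq_append, List.mem_append, List.mem_singleton] at hz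
      rcases hz with hz | hz
      · rcases walkUpTo_support r i j (by omega) z hz with h | ⟨j', hj', rfl⟩
        · exact Or.inl h
        · exact Or.inr ⟨j', by omega, rfl⟩
      · exact Or.inr ⟨⟨j+1, hj⟩, le_refl _, hz⟩

def walkToV (r : ℕ) (i : Fin (r+2)) :
    (k : ℕ) → (j : ℕ) → (hj : j < r - 1) → (hk : j + k = r - 2) →
      (thetaGraph r).Walk (Sum.inr (Sum.inr (i, ⟨j, hj⟩))) (Sum.inr (Sum.inl ()))
  | 0, j, hj, hk => SimpleGraph.Walk.cons
      ((theta_adj_v r i ⟨j, hj⟩ (by simp; omega)).symm) SimpleGraph.Walk.nil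
  | k+1, j, hj, hk => SimpleGraph.Walk.cons
      (theta_adj_step r i ⟨j, hj⟩ ⟨j+1, by omega⟩ rfl)
      (walkToV r i k (j+1) (by omega) (by omega))

lemma walkToV_length (r : ℕ) (i : Fin (r+2)) :
    ∀ (k j : ℕ) (hj : j < r - 1) (hk : j + k = r - 2),
      (walkToV r i k j hj hk).length = k + 1
  | 0, j, hj, hk => by simp [walkToV]
  | k+1, j, hj, hk => by
      rw [walkToV, SimpleGraph.Walk.length_cons, walkToV_length r i k]

lemma walkToV_support (r : ℕ) (i : Fin (r+2)) :
    ∀ (k j : ℕ) (hj : j < r - 1) (hk : j + k = r - 2),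
      ∀ z ∈ (walkToV r i k j hj hk).support,
      z = Sum.inr (Sum.inl ()) ∨ ∃ (j' : Fin (r-1)), j ≤ (j':ℕ) ∧ z = Sum.inr (Sum.inr (i, j'))
  | 0, j, hj, hk => by
      intro z hz
      simp [walkToV] at hz
      rcases hz with rfl | rfl
      · exact Or.inr ⟨⟨j, hj⟩, le_refl _, rfl⟩
      · exact Or.inl rfl
  | k+1, j, hj, hk => by
      intro z hz
      rw [walkToV, SimpleGraph.Walk.support_cons] at hz
      rcases List.mem_cons.mp hz with rfl | hz
      · exact Or.inr ⟨⟨j, hj⟩, le_refl _, rfl⟩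
      · rcases walkToV_support r i k (j+1) (by omega) (by omega) z hz with h | ⟨j', hj', rfl⟩
        · exact Or.inl h
        · exact Or.inr ⟨j', by omega, rfl⟩
def centerPot (r c : ℕ) (i' : Fin (r+2)) : Unit ⊕ Unit ⊕ (Fin (r+2) × Fin (r-1)) → ℤ
  | Sum.inl _ => c + 1
  | Sum.inr (Sum.inl _) => c + 1
  | Sum.inr (Sum.inr (i, j)) =>
      if i = i' then max ((j:ℤ) - c) ((c:ℤ) - j) else min ((j:ℤ) + c + 2) (2*r - 2 - j - c)

lemma centerPot_lipschitz (r c : ℕ) (hrc : r = 2*(c+1)) (i' : Fin (r+2))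
    {a b : Unit ⊕ Unit ⊕ (Fin (r+2) × Fin (r-1))} (h : (thetaGraph r).Adj a b) :
    centerPot r c i' a ≤ centerPot r c i' b + 1 := by
  rcases theta_adj_cases h with ⟨i, j, hj, h | h⟩ | ⟨i, j, hj, h | h⟩ | ⟨i, j, j', hj, h | h⟩ <;>
    obtain ⟨rfl, rfl⟩ := h <;> simp only [centerPot] <;> split_ifs <;>
    · have h2 := j.2
      first
      | (have h3 := j'.2; omega)
      | omega

lemma centerPot_walk (r c : ℕ) (hrc : r = 2*(c+1)) (i' : Fin (r+2))
    {x y : Unit ⊕ Unit ⊕ (Fin (r+2) × Fin (r-1))} (p : (thetaGraph r).Walk x y) :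
    centerPot r c i' x ≤ centerPot r c i' y + p.length := by
  induction p with
  | nil => simp
  | @cons a b d h p ih =>
    have h1 := centerPot_lipschitz r c hrc i' h
    rw [SimpleGraph.Walk.length_cons]
    push_cast
    omega

lemma theta_dist_centers (r : ℕ) (hr : 2 ≤ r) (hev : Even r) (c : Fin (r-1))
    (hc : (c:ℕ)+1 = r/2) (i i' : Fin (r+2)) (hne : i ≠ i') :
    (thetaGraph r).dist (Sum.inr (Sum.inr (i,c))) (Sum.inr (Sum.inr (i',c))) = r := by
  have hrc : r = 2*((c:ℕ)+1) := by obtain ⟨t, ht⟩ := hev; omega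
  have hcw : (c:ℕ) < r - 1 := c.2
  let p : (thetaGraph r).Walk (Sum.inr (Sum.inr (i,c))) (Sum.inr (Sum.inr (i',c))) :=
    ((walkUpTo r i c hcw).reverse.append (walkUpTo r i' c hcw))
  have hplen : p.length = r := by
    show ((walkUpTo r i c hcw).reverse.append (walkUpTo r i' c hcw)).length = r
    rw [SimpleGraph.Walk.length_append, SimpleGraph.Walk.length_reverse,
      walkUpTo_length, walkUpTo_length]
    omega
  have hle : (thetaGraph r).dist (Sum.inr (Sum.inr (i,c))) (Sum.inr (Sum.inr (i',c))) ≤ r :=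
    by have := SimpleGraph.dist_le p; omega
  have hreach : (thetaGraph r).Reachable (Sum.inr (Sum.inr (i,c))) (Sum.inr (Sum.inr (i',c))) := ⟨p⟩
  obtain ⟨q, hq⟩ := hreach.exists_walk_length_eq_dist
  have hpot := centerPot_walk r c hrc i' q
  have h1 : centerPot r c (i') (Sum.inr (Sum.inr (i,c))) = r := by
    simp only [centerPot, if_neg hne, min_def]
    split_ifs <;> omega
  have h2 : centerPot r c (i') (Sum.inr (Sum.inr (i',c))) = 0 := by
    simp only [centerPot, if_true, max_def]
    split_ifs <;> omega
  rw [h1, h2, hq] at hpot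
  omega
lemma reachable_induce_of_walk {V : Type*} {G : SimpleGraph V} {s : Set V} {x y : V}
    (w : G.Walk x y) (hsub : ∀ z ∈ w.support, z ∈ s) (hx : x ∈ s) (hy : y ∈ s) :
    (G.induce s).Reachable ⟨x, hx⟩ ⟨y, hy⟩ := by
  induction w with
  | nil => rfl
  | @cons a b d h p ih =>
      have hb : b ∈ s := hsub b (by simp)
      have hadj : (G.induce s).Adj ⟨a, hx⟩ ⟨b, hb⟩ := h
      exact hadj.reachable.trans (ih (fun z hz => hsub z (by simp [hz])) hb hy)

lemma reach_u (r : ℕ) (S : Set (Unit ⊕ Unit ⊕ (Fin (r+2) × Fin (r-1))))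
    (i : Fin (r+2)) (j : ℕ) (hj : j < r-1)
    (hu : Sum.inl () ∈ Sᶜ)
    (hcl : ∀ j' : Fin (r-1), (j':ℕ) ≤ j → Sum.inr (Sum.inr (i,j')) ∈ Sᶜ) :
    ((thetaGraph r).induce Sᶜ).Reachable ⟨Sum.inl (), hu⟩
      ⟨Sum.inr (Sum.inr (i, ⟨j,hj⟩)), hcl ⟨j,hj⟩ (le_refl _)⟩ := by
  apply reachable_induce_of_walk (walkUpTo r i j hj)
  intro z hz
  rcases walkUpTo_support r i j hj z hz with rfl | ⟨j', hj', rfl⟩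
  · exact hu
  · exact hcl j' hj'

lemma reach_v (r : ℕ) (hr : 2 ≤ r) (S : Set (Unit ⊕ Unit ⊕ (Fin (r+2) × Fin (r-1))))
    (i : Fin (r+2)) (j : ℕ) (hj : j < r-1)
    (hv : Sum.inr (Sum.inl ()) ∈ Sᶜ)
    (hcl : ∀ j' : Fin (r-1), j ≤ (j':ℕ) → Sum.inr (Sum.inr (i,j')) ∈ Sᶜ) :
    ((thetaGraph r).induce Sᶜ).Reachable ⟨Sum.inr (Sum.inr (i, ⟨j,hj⟩)), hcl ⟨j,hj⟩ (le_refl _)⟩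
      ⟨Sum.inr (Sum.inl ()), hv⟩ := by
  apply reachable_induce_of_walk (walkToV r i (r-2-j) j hj (by omega))
  intro z hz
  rcases walkToV_support r i (r-2-j) j hj (by omega) z hz with rfl | ⟨j', hj', rfl⟩
  · exact hv
  · exact hcl j' hj'

lemma reach_uv (r : ℕ) (hr : 2 ≤ r) (S : Set (Unit ⊕ Unit ⊕ (Fin (r+2) × Fin (r-1))))
    (i : Fin (r+2))
    (hu : Sum.inl () ∈ Sᶜ) (hv : Sum.inr (Sum.inl ()) ∈ Sᶜ)
    (hcl : ∀ j' : Fin (r-1), Sum.inr (Sum.inr (i,j')) ∈ Sᶜ) :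
    ((thetaGraph r).induce Sᶜ).Reachable ⟨Sum.inl (), hu⟩ ⟨Sum.inr (Sum.inl ()), hv⟩ := by
  have h0 : (0:ℕ) < r - 1 := by omega
  apply reachable_induce_of_walk
    (SimpleGraph.Walk.cons (theta_adj_u r i ⟨0, h0⟩ rfl)
      (walkToV r i (r-2) 0 h0 (by omega)))
  intro z hz
  rw [SimpleGraph.Walk.support_cons] at hz
  rcases List.mem_cons.mp hz with rfl | hz
  · exact hu
  · rcases walkToV_support r i (r-2) 0 h0 (by omega) z hz with rfl | ⟨j', _, rfl⟩
    · exact hv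
    · exact hcl j'
lemma theta_connected_del (r : ℕ) (hr : 2 ≤ r)
    (S : Set (Unit ⊕ Unit ⊕ (Fin (r+2) × Fin (r-1)))) (hS : S.Subsingleton) :
    ((thetaGraph r).induce Sᶜ).Connected := by
  rw [SimpleGraph.connected_iff]
  by_cases hu : Sum.inl () ∈ S
  · have hnot : ∀ z : Unit ⊕ Unit ⊕ (Fin (r+2) × Fin (r-1)), z ≠ Sum.inl () → z ∈ Sᶜ :=
      fun z hzne hzS => hzne (hS hzS hu)
    have hv : (Sum.inr (Sum.inl ()) : Unit ⊕ Unit ⊕ (Fin (r+2) × Fin (r-1))) ∈ Sᶜ :=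
      hnot _ (by simp)
    have key : ∀ z (hz : z ∈ Sᶜ),
        ((thetaGraph r).induce Sᶜ).Reachable ⟨z, hz⟩ ⟨Sum.inr (Sum.inl ()), hv⟩ := by
      rintro (_ | _ | ⟨i, j⟩) hz
      · exact absurd hu hz
      · exact SimpleGraph.Reachable.refl _
      · exact reach_v r hr S i j j.2 hv (fun j' _ => hnot _ (by simp))
    exact ⟨fun x y => (key x.1 x.2).trans (key y.1 y.2).symm, ⟨⟨_, hv⟩⟩⟩
  · have hu' : (Sum.inl () : Unit ⊕ Unit ⊕ (Fin (r+2) × Fin (r-1))) ∈ Sᶜ := hu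
    have huv : ∀ (hv : (Sum.inr (Sum.inl ()) : Unit ⊕ Unit ⊕ (Fin (r+2) × Fin (r-1))) ∈ Sᶜ),
        ((thetaGraph r).induce Sᶜ).Reachable ⟨Sum.inl (), hu'⟩ ⟨Sum.inr (Sum.inl ()), hv⟩ := by
      intro hv
      obtain ⟨i₁, hi₁⟩ : ∃ i₁ : Fin (r+2), ∀ j' : Fin (r-1),
          (Sum.inr (Sum.inr (i₁, j')) : Unit ⊕ Unit ⊕ (Fin (r+2) × Fin (r-1))) ∈ Sᶜ := by
        by_cases h0 : ∃ p : Fin (r+2) × Fin (r-1), Sum.inr (Sum.inr p) ∈ S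
        · obtain ⟨⟨i0, j0⟩, hp⟩ := h0
          obtain ⟨i₁, hi₁⟩ := exists_ne i0
          refine ⟨i₁, fun j' hmem => ?_⟩
          have h2 := hS hmem hp
          simp only [Sum.inr.injEq, Prod.mk.injEq] at h2
          exact hi₁ h2.1
        · exact ⟨⟨0, by omega⟩, fun j' hmem => h0 ⟨_, hmem⟩⟩
      exact reach_uv r hr S i₁ hu' hv hi₁
    have key : ∀ z (hz : z ∈ Sᶜ),
        ((thetaGraph r).induce Sᶜ).Reachable ⟨z, hz⟩ ⟨Sum.inl (), hu'⟩ := by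
      rintro (_ | _ | ⟨i, j⟩) hz
      · exact SimpleGraph.Reachable.refl _
      · exact (huv hz).symm
      · by_cases hd : ∃ j0 : Fin (r-1), Sum.inr (Sum.inr (i, j0)) ∈ S
        · obtain ⟨j0, hj0⟩ := hd
          have hjne : (j:ℕ) ≠ (j0:ℕ) := by
            intro h
            exact hz (by rwa [show j = j0 from Fin.ext h])
          by_cases hlt : (j:ℕ) < (j0:ℕ)
          · have hcl : ∀ j' : Fin (r-1), (j':ℕ) ≤ (j:ℕ) →
                (Sum.inr (Sum.inr (i,j')) : Unit ⊕ Unit ⊕ (Fin (r+2) × Fin (r-1))) ∈ Sᶜ := by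
              intro j' hle hmem
              have h2 := hS hmem hj0
              simp only [Sum.inr.injEq, Prod.mk.injEq] at h2
              have := congrArg Fin.val h2.2
              omega
            exact (reach_u r S i j j.2 hu' hcl).symm
          · have hv : (Sum.inr (Sum.inl ()) : Unit ⊕ Unit ⊕ (Fin (r+2) × Fin (r-1))) ∈ Sᶜ := by
              intro hmem
              have h2 := hS hmem hj0
              simp at h2
            have hcl : ∀ j' : Fin (r-1), (j:ℕ) ≤ (j':ℕ) →
                (Sum.inr (Sum.inr (i,j')) : Unit ⊕ Unit ⊕ (Fin (r+2) × Fin (r-1))) ∈ Sᶜ := by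
              intro j' hle hmem
              have h2 := hS hmem hj0
              simp only [Sum.inr.injEq, Prod.mk.injEq] at h2
              have := congrArg Fin.val h2.2
              omega
            exact (reach_v r hr S i j j.2 hv hcl).trans (huv hv).symm
        · push_neg at hd
          exact (reach_u r S i j j.2 hu' (fun j' _ => hd j')).symm
    exact ⟨fun x y => (key x.1 x.2).trans (key y.1 y.2).symm, ⟨⟨_, hu'⟩⟩⟩
theorem thetaGraph_no_clique_factor (r : ℕ) (hr : 2 ≤ r) (hev : Even r) :
    KConnected 2 (thetaGraph r) ∧
    Fintype.card (Unit ⊕ Unit ⊕ (Fin (r + 2) × Fin (r - 1))) = r ^ 2 + r ∧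
    (∀ c : Fin (r - 1), (c : ℕ) + 1 = r / 2 →
      ∀ i i' : Fin (r + 2), i ≠ i' →
        (thetaGraph r).dist (Sum.inr (Sum.inr (i, c))) (Sum.inr (Sum.inr (i', c))) = r) ∧
    ¬ HasCliqueFactor (gpow (thetaGraph r) (r - 1)) r := by
  have hcard : Fintype.card (Unit ⊕ Unit ⊕ (Fin (r + 2) × Fin (r - 1))) = r ^ 2 + r := by
    obtain ⟨s, rfl⟩ : ∃ s, r = s + 2 := ⟨r - 2, by omega⟩
    simp only [Fintype.card_sum, Fintype.card_prod, Fintype.card_fin, Fintype.card_unit]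
    have h1 : s + 2 - 1 = s + 1 := rfl
    rw [h1]
    ring
  refine ⟨⟨?_, ?_⟩, hcard, ?_, ?_⟩
  · rw [Nat.card_eq_fintype_card, hcard]; nlinarith
  · intro S hSn
    refine theta_connected_del r hr S (fun x hx y hy => ?_)
    exact (Set.ncard_le_one_iff (Set.toFinite S)).mp (by omega) hx hy
  · exact fun c hc i i' hne => theta_dist_centers r hr hev c hc i i' hne
  · rintro ⟨P, hP⟩
    have hc' : r/2 - 1 < r - 1 := by omega
    set c : Fin (r-1) := ⟨r/2 - 1, hc'⟩ with hcdef
    have hc : (c:ℕ) + 1 = r/2 := by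
      simp only [hcdef]
      omega
    have hpc : P.parts.card = r + 1 := by
      have hsum := P.sum_card_parts
      have h1 : ∑ p ∈ P.parts, p.card = P.parts.card * r :=
        Finset.sum_const_nat (fun p hp => (hP p hp).1)
      rw [h1, Finset.card_univ, hcard] at hsum
      have h2 : (r+1) * r = r^2 + r := by ring
      have h3 : 0 < r := by omega
      exact Nat.eq_of_mul_eq_mul_right h3 (by omega)
    have hex : ∀ i : Fin (r+2), ∃ p, p ∈ P.parts ∧
        (Sum.inr (Sum.inr (i, c)) : Unit ⊕ Unit ⊕ (Fin (r+2) × Fin (r-1))) ∈ p := by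
      intro i
      obtain ⟨p, hp, hmem⟩ := P.exists_mem (Finset.mem_univ _)
      exact ⟨p, hp, hmem⟩
    choose f hf1 hf2 using hex
    have hinj : Function.Injective f := by
      intro i i' h
      by_contra hne
      have hclique := (hP (f i) (hf1 i)).2
      have hadj := hclique (hf2 i) (h ▸ hf2 i')
        (by simp only [ne_eq, Sum.inr.injEq, Prod.mk.injEq, not_and]; exact fun h _ => hne h)
      have hd := hadj.2
      rw [theta_dist_centers r hr hev c hc i i' hne] at hd
      omega
    have hcle : (Finset.univ : Finset (Fin (r+2))).card ≤ P.parts.card :=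
      Finset.card_le_card_of_injOn f (fun i _ => hf1 i) hinj.injOn
    rw [Finset.card_univ, Fintype.card_fin, hpc] at hcle
    omega
end

section
/- Let G be a 2-connected graph that is not 3-connected, with minimum degree at least 3. Let {u,v} be a 2-cut of G for which the smallest component C of G − {u,v} has minimum possible order. Then C has at least two vertices, and for every vertex x of C, the graph G − x is 2-connected. -/
open SimpleGraph Finset

section Helpers
variable {V : Type*} {G : SimpleGraph V}

/-- `D` is closed with respect to cut set `S`. -/
def MyClosed (G : SimpleGraph V) (S D : Set V) : Prop :=
  ∀ a ∈ D, ∀ b, G.Adj a b → b ∈ D ∪ S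

lemma walk_closed {S D : Set V} (hcl : MyClosed G S D)
    {a b : ↥(Sᶜ : Set V)} (w : (G.induce (Sᶜ : Set V)).Walk a b) (ha : (a : V) ∈ D) :
    ∃ hb : (b : V) ∈ D, (G.induce D).Reachable ⟨a, ha⟩ ⟨b, hb⟩ := by
  induction w with
  | nil => exact ⟨ha, Reachable.refl _⟩
  | @cons p q r hadj w ih =>
    have hq : (q : V) ∈ D := by
      rcases hcl p ha q (by exact hadj) with h | h
      · exact h
      · exact absurd h q.2
    obtain ⟨hb, hr⟩ := ih hq
    exact ⟨hb, Reachable.trans (SimpleGraph.Adj.reachable (by exact hadj)) hr⟩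

lemma reach_closed {S D : Set V} (hcl : MyClosed G S D)
    {a b : ↥(Sᶜ : Set V)} (h : (G.induce (Sᶜ : Set V)).Reachable a b) (ha : (a : V) ∈ D) :
    (b : V) ∈ D :=
  (walk_closed hcl h.some ha).1

/-- A nonempty closed set with nonempty complement disconnects. -/
lemma closed_disconnects {S D : Set V} (hD : D.Nonempty) (hDS : D ⊆ Sᶜ)
    (hcl : MyClosed G S D) (hco : (Sᶜ \ D).Nonempty) :
    ¬ (G.induce (Sᶜ : Set V)).Connected := by
  intro hcon
  obtain ⟨d, hd⟩ := hD
  obtain ⟨e, heS, heD⟩ := hco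
  exact heD (reach_closed hcl (hcon.preconnected ⟨d, hDS hd⟩ ⟨e, heS⟩) hd)

/-- The image of the supp of a connected component of `G.induce Sᶜ`. -/
def csupp {S : Set V} (C : (G.induce (Sᶜ : Set V)).ConnectedComponent) : Set V :=
  Subtype.val '' C.supp

lemma csupp_subset {S : Set V} (C : (G.induce (Sᶜ : Set V)).ConnectedComponent) :
    csupp C ⊆ Sᶜ := by rintro a ⟨⟨a, ha⟩, _, rfl⟩; exact ha

lemma mem_csupp_iff {S : Set V} (C : (G.induce (Sᶜ : Set V)).ConnectedComponent)
    {a : ↥(Sᶜ : Set V)} : (a : V) ∈ csupp C ↔ C = (G.induce (Sᶜ : Set V)).connectedComponentMk a := by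
  constructor
  · rintro ⟨b, hb, hba⟩
    have : b = a := Subtype.ext hba
    subst this
    exact (C.mem_supp_iff b).mp hb |>.symm
  · intro h
    exact ⟨a, (C.mem_supp_iff a).mpr h.symm, rfl⟩

lemma csupp_nonempty {S : Set V} (C : (G.induce (Sᶜ : Set V)).ConnectedComponent) :
    (csupp C).Nonempty := by
  induction C using SimpleGraph.ConnectedComponent.ind with
  | _ a => exact ⟨a, (mem_csupp_iff _).mpr rfl⟩

/-- The supp of a component is a closed set. -/
lemma csupp_closed {S : Set V} (C : (G.induce (Sᶜ : Set V)).ConnectedComponent) :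
    MyClosed G S (csupp C) := by
  rintro a ⟨⟨a, haS⟩, ha, rfl⟩ b hab
  by_cases hbS : b ∈ S
  · exact Or.inr hbS
  · left
    refine ⟨⟨b, hbS⟩, ?_, rfl⟩
    rw [ConnectedComponent.mem_supp_iff] at ha ⊢
    rw [← ha]
    exact ConnectedComponent.connectedComponentMk_eq_of_adj (by exact hab.symm)

/-- components of a closed set stay inside it -/
lemma csupp_subset_closed {S D : Set V} (hDS : D ⊆ Sᶜ) (hcl : MyClosed G S D)
    {d : V} (hd : d ∈ D) :
    csupp ((G.induce (Sᶜ : Set V)).connectedComponentMk ⟨d, hDS hd⟩) ⊆ D := by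
  rintro a ⟨⟨a, haS⟩, ha, rfl⟩
  rw [ConnectedComponent.mem_supp_iff, ConnectedComponent.eq] at ha
  exact reach_closed hcl ha.symm hd

lemma csupp_induce_connected {S : Set V} (C : (G.induce (Sᶜ : Set V)).ConnectedComponent) :
    (G.induce (csupp C)).Connected := by
  rw [SimpleGraph.connected_iff_exists_forall_reachable]
  obtain ⟨c, hc⟩ := csupp_nonempty C
  refine ⟨⟨c, hc⟩, ?_⟩
  rintro ⟨b, hb⟩
  obtain ⟨⟨c', hc'S⟩, hc', rfl⟩ := hc
  obtain ⟨⟨b', hb'S⟩, hb', rfl⟩ := hb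
  rw [ConnectedComponent.mem_supp_iff] at hc' hb'
  have hreach : (G.induce (Sᶜ : Set V)).Reachable ⟨c', hc'S⟩ ⟨b', hb'S⟩ := by
    rw [← ConnectedComponent.eq, hc', hb']
  have hcl := csupp_closed C
  have hcD : c' ∈ csupp C := ⟨⟨c', hc'S⟩, (C.mem_supp_iff _).mpr hc', rfl⟩
  obtain ⟨hbD, hr⟩ := walk_closed hcl hreach.some hcD
  exact hr

lemma my_induce_singleton_connected (G : SimpleGraph V) (a : V) :
    (G.induce ({a} : Set V)).Connected := by
  rw [SimpleGraph.connected_iff_exists_forall_reachable]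
  refine ⟨⟨a, rfl⟩, ?_⟩
  rintro ⟨b, hb⟩
  cases hb
  rfl

lemma reach_mono {s t : Set V} (hst : s ⊆ t) {a b : ↥s}
    (h : (G.induce s).Reachable a b) :
    (G.induce t).Reachable ⟨a, hst a.2⟩ ⟨b, hst b.2⟩ :=
  h.map (SimpleGraph.induceHomOfLE G hst).toHom

lemma exists_other_component {S : Set V} (hdis : ¬ (G.induce (Sᶜ : Set V)).Connected)
    (a : ↥(Sᶜ : Set V)) :
    ∃ C' : (G.induce (Sᶜ : Set V)).ConnectedComponent,
      C' ≠ (G.induce (Sᶜ : Set V)).connectedComponentMk a := by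
  by_contra h
  push_neg at h
  apply hdis
  rw [SimpleGraph.connected_iff_exists_forall_reachable]
  refine ⟨a, fun b => ?_⟩
  have := h ((G.induce (Sᶜ : Set V)).connectedComponentMk b)
  rw [ConnectedComponent.eq] at this
  exact this.symm

lemma csupp_disjoint {S : Set V} {C C' : (G.induce (Sᶜ : Set V)).ConnectedComponent}
    (h : C ≠ C') {z : V} (hz : z ∈ csupp C) : z ∉ csupp C' := by
  rintro ⟨⟨z, hzS⟩, hz', rfl⟩
  obtain ⟨⟨z2, hz2⟩, hzC, h2⟩ := hz
  cases Subtype.ext h2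
  rw [ConnectedComponent.mem_supp_iff] at hz' hzC
  exact h (hzC.symm.trans hz')

/-- transfer double induce to single induce of the image. -/
noncomputable def induceInduceIso (G : SimpleGraph V) (s : Set V) (t : Set ↥s) :
    ((G.induce s).induce t) ≃g (G.induce (Subtype.val '' t : Set V)) where
  toEquiv := Equiv.Set.image Subtype.val t Subtype.val_injective
  map_rel_iff' := by
    rintro ⟨⟨a, has⟩, hat⟩ ⟨⟨b, hbs⟩, hbt⟩
    simp [Equiv.Set.image, Equiv.Set.imageOfInjOn]

/-- If removing the single vertex `z'` keeps `G` connected, then `z` has a neighbor in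
every nonempty set `D ⊆ {z,z'}ᶜ` closed w.r.t. `{z,z'}`. -/
lemma adj_into_closed {z z' : V} (hdel : (G.induce ({z'}ᶜ : Set V)).Connected)
    (hzz' : z ≠ z') {D : Set V} (hDne : D.Nonempty) (hDW : D ⊆ ({z, z'} : Set V)ᶜ)
    (hcl : MyClosed G {z, z'} D) : ∃ c ∈ D, G.Adj z c := by
  by_contra h
  push_neg at h
  have hcl' : MyClosed G {z'} D := by
    intro a ha b hab
    rcases hcl a ha b hab with hb | hb
    · exact Or.inl hb
    · rcases hb with hb | hb
      · exact absurd (hb ▸ hab.symm) (fun hh => h a ha hh)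
      · exact Or.inr hb
  have hD1 : D ⊆ ({z'} : Set V)ᶜ := fun d hd => by
    have := hDW hd
    simp only [Set.mem_compl_iff, Set.mem_insert_iff, Set.mem_singleton_iff] at this ⊢
    exact fun hh => this (Or.inr hh)
  have hco : (({z'} : Set V)ᶜ \ D).Nonempty := by
    refine ⟨z, ?_, fun hz => ?_⟩
    · simpa using hzz'
    · have := hDW hz
      simp at this
  exact closed_disconnects hDne hD1 hcl' hco hdel

/-- A closed set `R`, each of whose components has a neighbor of `b`, together
with `b`, induces a connected graph. -/
lemma conn_union_base {S R : Set V} {b : V} (hRS : R ⊆ Sᶜ) (hcl : MyClosed G S R)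
    (hb : ∀ D : Set V, D.Nonempty → D ⊆ R → MyClosed G S D → ∃ c ∈ D, G.Adj b c) :
    (G.induce (R ∪ {b})).Connected := by
  apply G.induce_connected_of_patches b (Or.inr rfl)
  intro w hw
  rcases hw with hw | hw
  · -- w ∈ R
    set B := (G.induce (Sᶜ : Set V)).connectedComponentMk ⟨w, hRS hw⟩ with hB
    have hBR : csupp B ⊆ R := csupp_subset_closed hRS hcl hw
    obtain ⟨c, hcB, hbc⟩ := hb (csupp B) (csupp_nonempty B) hBR (csupp_closed B)
    have hconn : (G.induce (csupp B ∪ {b})).Connected :=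
      connected_induce_union (csupp_induce_connected B).preconnected
        (my_induce_singleton_connected G b).preconnected hcB rfl hbc.symm
    have hwB : w ∈ csupp B := (mem_csupp_iff B).mpr rfl
    refine ⟨csupp B ∪ {b}, ?_, Or.inr rfl, Or.inl hwB, hconn.preconnected _ _⟩
    exact Set.union_subset_union_left _ hBR
  · cases hw
    exact ⟨{b}, by simp, rfl, rfl, Reachable.refl _⟩

end Helpers

theorem minimal_two_cut_component {V : Type*} [Fintype V] (G : SimpleGraph V)
    (h2 : KConnected 2 G) (h3 : ¬ KConnected 3 G)
    (hdeg : ∀ w : V, 3 ≤ (G.neighborSet w).ncard)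
    (u v : V) (huv : u ≠ v) (hcut : ¬ (G.induce ({u, v}ᶜ : Set V)).Connected)
    (C : (G.induce ({u, v}ᶜ : Set V)).ConnectedComponent)
    (hmin : ∀ u' v' : V, u' ≠ v' → ¬ (G.induce ({u', v'}ᶜ : Set V)).Connected →
      ∀ C' : (G.induce ({u', v'}ᶜ : Set V)).ConnectedComponent,
        C.supp.ncard ≤ C'.supp.ncard) :
    2 ≤ C.supp.ncard ∧
    ∀ x : ({u, v}ᶜ : Set V), x ∈ C.supp →
      KConnected 2 (G.induce ({(x : V)}ᶜ : Set V)) := by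
  classical
  -- deletion of a single vertex keeps connectivity
  have del1 : ∀ z : V, (G.induce (({z} : Set V)ᶜ)).Connected := by
    intro z
    apply h2.2
    simp
  -- number of vertices is at least 4
  have hV4 : 4 ≤ Nat.card V := by
    have h0 : 0 < Nat.card V := by have := h2.1; omega
    have hne : Nonempty V := (Nat.card_pos_iff.mp h0).1
    obtain ⟨w⟩ := hne
    have hsub : insert w (G.neighborSet w) ⊆ Set.univ := Set.subset_univ _
    have hw : w ∉ G.neighborSet w := fun h => G.irrefl h
    have h1 : (insert w (G.neighborSet w)).ncard = (G.neighborSet w).ncard + 1 :=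
      Set.ncard_insert_of_notMem hw (Set.toFinite _)
    have h2' : (insert w (G.neighborSet w)).ncard ≤ (Set.univ : Set V).ncard :=
      Set.ncard_le_ncard hsub (Set.toFinite _)
    rw [Set.ncard_univ] at h2'
    have := hdeg w
    omega
  -- the minimality hypothesis, reformulated for closed sets
  have hmin' : ∀ a b : V, a ≠ b → ∀ D : Set V, D.Nonempty → D ⊆ ({a, b} : Set V)ᶜ →
      MyClosed G {a, b} D → ((({a, b} : Set V)ᶜ) \ D).Nonempty →
      C.supp.ncard ≤ D.ncard := by
    intro a b hab D hDne hDW hcl hco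
    have hdis := closed_disconnects hDne hDW hcl hco
    obtain ⟨d, hd⟩ := hDne
    have h1 := hmin a b hab hdis ((G.induce (({a, b} : Set V)ᶜ)).connectedComponentMk ⟨d, hDW hd⟩)
    have hsub : csupp ((G.induce (({a, b} : Set V)ᶜ)).connectedComponentMk ⟨d, hDW hd⟩) ⊆ D :=
      csupp_subset_closed hDW hcl hd
    calc C.supp.ncard
        ≤ ((G.induce (({a, b} : Set V)ᶜ)).connectedComponentMk ⟨d, hDW hd⟩).supp.ncard := h1
      _ = (csupp ((G.induce (({a, b} : Set V)ᶜ)).connectedComponentMk ⟨d, hDW hd⟩)).ncard :=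
          (Set.ncard_image_of_injective _ Subtype.val_injective).symm
      _ ≤ D.ncard := Set.ncard_le_ncard hsub (Set.toFinite D)
  set Cset : Set V := csupp C with hCset
  have hCsubK : Cset ⊆ ({u, v} : Set V)ᶜ := csupp_subset C
  have hCclosed : MyClosed G {u, v} Cset := csupp_closed C
  have hCne : Cset.Nonempty := csupp_nonempty C
  have hncard : Cset.ncard = C.supp.ncard :=
    Set.ncard_image_of_injective _ Subtype.val_injective
  -- Part 1
  have part1 : 2 ≤ C.supp.ncard := by
    by_contra h
    push_neg at h
    have h1 : Cset.ncard = 1 := by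
      have h0 : 0 < Cset.ncard := (Set.ncard_pos (Set.toFinite _)).mpr hCne
      omega
    obtain ⟨x, hx⟩ := Set.ncard_eq_one.mp h1
    have hnbr : G.neighborSet x ⊆ {u, v} := by
      intro b hb
      have hxC : x ∈ Cset := hx ▸ rfl
      rcases hCclosed x hxC b hb with hbC | hbK
      · rw [hx] at hbC
        cases hbC
        exact absurd hb (G.irrefl)
      · exact hbK
    have h2' : (G.neighborSet x).ncard ≤ 2 := by
      have := Set.ncard_le_ncard hnbr (Set.toFinite _)
      rwa [Set.ncard_pair huv] at this
    have := hdeg x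
    omega
  refine ⟨part1, ?_⟩
  rintro ⟨x0, hx0K⟩ hx
  have hx0 : x0 ∈ Cset := ⟨_, hx, rfl⟩
  have hx0u : x0 ≠ u := fun h => hx0K (by simp [h])
  have hx0v : x0 ≠ v := fun h => hx0K (by simp [h])
  constructor
  · -- more than 2 vertices in G - x
    show 2 < Nat.card ↥({x0}ᶜ : Set V)
    rw [Nat.card_coe_set_eq]
    have hcompl : ({x0} : Set V).ncard + ({x0}ᶜ : Set V).ncard = Nat.card V :=
      Set.ncard_add_ncard_compl _
    rw [Set.ncard_singleton] at hcompl
    omega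
  · intro S hS
    rw [(induceInduceIso G ({x0}ᶜ : Set V) Sᶜ).connected_iff]
    have himg : (Subtype.val '' (Sᶜ : Set ↥({x0}ᶜ : Set V)) : Set V)
        = ({x0} ∪ Subtype.val '' S)ᶜ := by
      ext z
      constructor
      · rintro ⟨⟨w, hw⟩, hwS, rfl⟩
        intro hz
        rcases hz with hz | hz
        · exact hw hz
        · obtain ⟨w', hw'S, hww⟩ := hz
          exact hwS (by rwa [show w' = ⟨w, hw⟩ from Subtype.ext hww] at hw'S)
      · intro h
        have h1 : z ∉ ({x0} : Set V) := fun hz => h (Or.inl hz)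
        exact ⟨⟨z, h1⟩, fun hzS => h (Or.inr ⟨_, hzS, rfl⟩), rfl⟩
    rw [himg]
    -- S has at most one element
    have hS1 : S = ∅ ∨ ∃ y : ↥({x0}ᶜ : Set V), S = {y} := by
      rcases Set.eq_empty_or_nonempty S with h | h
      · exact Or.inl h
      · right
        have h0 : 0 < S.ncard := (Set.ncard_pos (Set.toFinite _)).mpr h
        have : S.ncard = 1 := by omega
        exact Set.ncard_eq_one.mp this
    rcases hS1 with rfl | ⟨⟨y0, hy0x⟩, rfl⟩
    · have : ({x0} ∪ Subtype.val '' (∅ : Set ↥({x0}ᶜ : Set V)) : Set V) = {x0} := by simp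
      rw [this]
      exact del1 x0
    · -- the main case : two-vertex deletion
      have himg2 : ({x0} ∪ Subtype.val '' ({⟨y0, hy0x⟩} : Set ↥({x0}ᶜ : Set V)) : Set V)
          = {x0, y0} := by
        simp only [Set.image_singleton]
        rw [Set.union_singleton, Set.pair_comm]
      rw [himg2]
      by_contra hWdis
      have hxy : x0 ≠ y0 := fun h => hy0x (by simp [h])
      -- basic facts
      have hCu : u ∉ Cset := fun h => (hCsubK h) (Or.inl rfl)
      have hCv : v ∉ Cset := fun h => (hCsubK h) (Or.inr rfl)
      set R : Set V := ({u, v} : Set V)ᶜ \ Cset with hRdef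
      have hRsub : R ⊆ ({u, v} : Set V)ᶜ := fun z hz => hz.1
      have hRclosed : MyClosed G {u, v} R := by
        rintro a ⟨haK, haC⟩ b hab
        by_cases hbK : b ∈ ({u, v} : Set V)
        · exact Or.inr hbK
        by_cases hbC : b ∈ Cset
        · rcases hCclosed b hbC a hab.symm with h | h
          · exact absurd h haC
          · exact absurd h haK
        · exact Or.inl ⟨hbK, hbC⟩
      have hRne : R.Nonempty := by
        rw [Set.nonempty_iff_ne_empty]
        intro h
        apply hcut
        have hCeq : Cset = ({u, v} : Set V)ᶜ := by
          apply Set.Subset.antisymm hCsubK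
          intro z hz
          by_contra hzC
          have : z ∈ R := ⟨hz, hzC⟩
          rw [h] at this
          exact this
        have hcc := csupp_induce_connected C
        rwa [← hCset, hCeq] at hcc
      -- every cut vertex has a neighbor in every closed set
      have hadjK : ∀ b ∈ ({u, v} : Set V), ∀ D : Set V, D.Nonempty →
          D ⊆ ({u, v} : Set V)ᶜ → MyClosed G {u, v} D → ∃ c ∈ D, G.Adj b c := by
        intro b hb D hDne hDsub hDcl
        rcases hb with rfl | hb
        · exact adj_into_closed (del1 v) huv hDne hDsub hDcl
        · cases hb
          rw [Set.pair_comm] at hDsub hDcl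
          exact adj_into_closed (del1 u) huv.symm hDne hDsub hDcl
      have hconnRb : ∀ b ∈ ({u, v} : Set V), (G.induce (R ∪ {b})).Connected := by
        intro b hb
        exact conn_union_base hRsub hRclosed
          (fun D hne hsub hcl => hadjK b hb D hne (hsub.trans hRsub) hcl)
      have hconnRK : (G.induce (R ∪ {u, v})).Connected := by
        obtain ⟨r, hr⟩ := hRne
        have h1 := hconnRb u (Or.inl rfl)
        have h2 := hconnRb v (Or.inr rfl)
        have h3 := induce_union_connected h1.preconnected h2.preconnected ⟨r, Or.inl hr, Or.inl hr⟩
        have heq : (R ∪ {u}) ∪ (R ∪ {v}) = R ∪ ({u, v} : Set V) := by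
          ext z
          simp only [Set.mem_union, Set.mem_singleton_iff, Set.mem_insert_iff]
          tauto
        rwa [heq] at h3
      -- the small-component contradiction
      have hSCC : ∀ D : Set V, D.Nonempty → D ⊆ ({x0, y0} : Set V)ᶜ →
          D ⊆ Cset \ {x0} → MyClosed G {x0, y0} D → False := by
        intro D hne hDW hDC hcl
        have hDuv : ∀ z ∈ D, z ≠ u ∧ z ≠ v := by
          intro z hz
          have hzC := (hDC hz).1
          exact ⟨fun h => hCu (h ▸ hzC), fun h => hCv (h ▸ hzC)⟩
        have hco : ((({x0, y0} : Set V)ᶜ) \ D).Nonempty := by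
          by_cases hyu : y0 = u
          · refine ⟨v, ?_, fun hv => (hDuv v hv).2 rfl⟩
            intro hmem
            rcases hmem with h | h
            · exact hx0v h.symm
            · rw [← h] at hyu; exact huv (hyu ▸ rfl)
          · refine ⟨u, ?_, fun hu => (hDuv u hu).1 rfl⟩
            intro hmem
            rcases hmem with h | h
            · exact hx0u h.symm
            · exact hyu h.symm
        have hsize := hmin' x0 y0 hxy D hne hDW hcl hco
        have h1 : D.ncard ≤ (Cset \ {x0}).ncard := Set.ncard_le_ncard hDC (Set.toFinite _)
        have h2 : (Cset \ {x0}).ncard < Cset.ncard :=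
          Set.ncard_diff_singleton_lt_of_mem hx0 (Set.toFinite _)
        omega
      -- the connected-piece argument, common to the cases y0 ∈ Cset and y0 ∈ {u,v}
      have hAarg : ∀ A : Set V, (G.induce A).Connected → A ⊆ ({x0, y0} : Set V)ᶜ →
          (∀ z, z ∉ A → z ∉ ({x0, y0} : Set V) → z ∈ Cset) → False := by
        intro A hAconn hAW hAcover
        obtain ⟨a0, ha0⟩ := hAconn.nonempty
        have hAsub : ∀ z (hz : z ∈ A),
            z ∈ csupp ((G.induce (({x0, y0} : Set V)ᶜ)).connectedComponentMk ⟨a0, hAW ha0⟩) := by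
          intro z hz
          have hreach : (G.induce A).Reachable ⟨a0, ha0⟩ ⟨z, hz⟩ := hAconn.preconnected _ _
          have hre := reach_mono hAW hreach
          exact (mem_csupp_iff _ (a := ⟨z, hAW hz⟩)).mpr (ConnectedComponent.sound hre)
        obtain ⟨D', hD'⟩ := exists_other_component hWdis ⟨a0, hAW ha0⟩
        apply hSCC (csupp D') (csupp_nonempty D') (csupp_subset D') ?_ (csupp_closed D')
        intro z hz
        have hzW : z ∈ (({x0, y0} : Set V)ᶜ) := csupp_subset D' hz
        have hznA : z ∉ A := fun hzA => csupp_disjoint hD' hz (hAsub z hzA)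
        refine ⟨hAcover z hznA hzW, fun hzx => ?_⟩
        cases hzx
        exact hzW (Or.inl rfl)
      by_cases hyC : y0 ∈ Cset
      · -- Case 1 : y0 lies in the minimal component
        apply hAarg (R ∪ {u, v}) hconnRK
        · rintro z (hz | hz)
          · intro hmem
            rcases hmem with h | h
            · exact hz.2 (h ▸ hx0)
            · exact hz.2 (h ▸ hyC)
          · intro hmem
            rcases hmem with h | h
            · exact hx0K (h ▸ hz)
            · rcases hz with rfl | rfl
              · exact hCu (h ▸ hyC)
              · exact hCv (h ▸ hyC)
        · intro z hzA hzW
          by_contra hzC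
          exact hzA (Or.inl ⟨fun hK => hzA (Or.inr hK), hzC⟩)
      · by_cases hyK : y0 ∈ ({u, v} : Set V)
        · -- Case 2 : y0 is one of the original cut vertices
          obtain ⟨b, hbK, hby⟩ : ∃ b, b ∈ ({u, v} : Set V) ∧ b ≠ y0 ∧
              ∀ z ∈ ({u, v} : Set V), z = y0 ∨ z = b := by
            rcases hyK with rfl | hy
            · exact ⟨v, Or.inr rfl, huv.symm, fun z hz => hz.imp id id⟩
            · cases hy
              exact ⟨u, Or.inl rfl, huv, fun z hz => hz.symm.imp id id⟩
          obtain ⟨hbne, hbcov⟩ := hby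
          apply hAarg (R ∪ {b}) (hconnRb b hbK)
          · rintro z (hz | hz)
            · intro hmem
              rcases hmem with h | h
              · exact hz.2 (h ▸ hx0)
              · exact hz.1 (h ▸ hyK)
            · cases hz
              intro hmem
              rcases hmem with h | h
              · exact hx0K (h ▸ hbK)
              · exact hbne h
          · intro z hzA hzW
            by_contra hzC
            apply hzA
            by_cases hzK : z ∈ ({u, v} : Set V)
            · rcases hbcov z hzK with rfl | rfl
              · exact absurd (Or.inr rfl) hzW
              · exact Or.inr rfl
            · exact Or.inl ⟨hzK, hzC⟩
        · -- Case 3 : y0 lies in another component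
          have hyR : y0 ∈ R := ⟨hyK, hyC⟩
          have huW : u ∈ (({x0, y0} : Set V)ᶜ) := by
            intro hmem
            rcases hmem with h | h
            · exact hx0u h.symm
            · exact hyK (h ▸ Or.inl rfl)
          have hvW : v ∈ (({x0, y0} : Set V)ᶜ) := by
            intro hmem
            rcases hmem with h | h
            · exact hx0v h.symm
            · exact hyK (h ▸ Or.inr rfl)
          -- Step A: no component of G - {x0,y0} avoids both u and v
          have hstepA : ∀ D' : (G.induce (({x0, y0} : Set V)ᶜ)).ConnectedComponent,
              u ∉ csupp D' → v ∉ csupp D' → False := by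
            intro D' hunm hvnm
            have hDW : csupp D' ⊆ (({x0, y0} : Set V)ᶜ) := csupp_subset D'
            have hDcl : MyClosed G {x0, y0} (csupp D') := csupp_closed D'
            obtain ⟨d, hd⟩ := csupp_nonempty D'
            have hDK : csupp D' ⊆ (({u, v} : Set V)ᶜ) := by
              intro z hz hzK
              rcases hzK with rfl | hzK
              · exact hunm hz
              · cases hzK; exact hvnm hz
            -- csupp D' lies inside one component of G - {u,v}
            have hDBd : csupp D' ⊆
                csupp ((G.induce (({u, v} : Set V)ᶜ)).connectedComponentMk ⟨d, hDK hd⟩) := by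
              intro z hz
              have hzW : z ∈ (({x0, y0} : Set V)ᶜ) := hDW hz
              have hreach : (G.induce (({x0, y0} : Set V)ᶜ)).Reachable ⟨d, hDW hd⟩ ⟨z, hzW⟩ := by
                rw [← ConnectedComponent.eq]
                have h1 := ((mem_csupp_iff D' (a := ⟨d, hDW hd⟩)).mp hd).symm
                have h2 := ((mem_csupp_iff D' (a := ⟨z, hzW⟩)).mp hz).symm
                rw [h1, h2]
              obtain ⟨_, hrD⟩ := walk_closed hDcl hreach.some hd
              have hre := reach_mono hDK hrD
              exact (mem_csupp_iff _ (a := ⟨z, hDK hz⟩)).mpr (ConnectedComponent.sound hre)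
            by_cases hBdC : (G.induce (({u, v} : Set V)ᶜ)).connectedComponentMk ⟨d, hDK hd⟩ = C
            · -- the component lies inside Cset : small component contradiction
              apply hSCC (csupp D') ⟨d, hd⟩ hDW ?_ hDcl
              intro z hz
              refine ⟨by rw [hCset, ← hBdC]; exact hDBd hz, fun hzx => ?_⟩
              cases hzx
              exact (hDW hz) (Or.inl rfl)
            · -- the component is cut off by y0 alone : contradicts 2-connectivity
              have hcl' : MyClosed G {y0} (csupp D') := by
                intro a ha b hab
                rcases hDcl a ha b hab with hb | hb
                · exact Or.inl hb
                · rcases hb with rfl | rfl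
                  · -- b = x0 : impossible
                    exfalso
                    rcases csupp_closed _ a (hDBd ha) b hab with hbB | hbK
                    · exact csupp_disjoint (Ne.symm hBdC) hx0 hbB
                    · exact hx0K hbK
                  · exact Or.inr rfl
              have hD1 : csupp D' ⊆ (({y0} : Set V)ᶜ) := by
                intro z hz hzy
                cases hzy
                exact (hDW hz) (Or.inr rfl)
              have hco : ((({y0} : Set V)ᶜ) \ csupp D').Nonempty := by
                refine ⟨u, fun h => ?_, hunm⟩
                cases h
                exact hyK (Or.inl rfl)
              exact closed_disconnects ⟨d, hd⟩ hD1 hcl' hco (del1 y0)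
          have hstepB : ∀ D' : (G.induce (({x0, y0} : Set V)ᶜ)).ConnectedComponent,
              u ∈ csupp D' ∨ v ∈ csupp D' := by
            intro D'
            by_contra h
            push_neg at h
            exact hstepA D' h.1 h.2
          -- u and v lie in different components
          have hDuv : (G.induce (({x0, y0} : Set V)ᶜ)).connectedComponentMk ⟨u, huW⟩ ≠
              (G.induce (({x0, y0} : Set V)ᶜ)).connectedComponentMk ⟨v, hvW⟩ := by
            intro h
            apply hWdis
            rw [connected_iff_exists_forall_reachable]
            refine ⟨⟨u, huW⟩, fun b => ?_⟩
            rcases hstepB ((G.induce (({x0, y0} : Set V)ᶜ)).connectedComponentMk b) with hb | hb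
            · have := (mem_csupp_iff _ (a := ⟨u, huW⟩)).mp hb
              exact (ConnectedComponent.eq.mp this).symm
            · have := (mem_csupp_iff _ (a := ⟨v, hvW⟩)).mp hb
              exact (ConnectedComponent.eq.mp h).trans (ConnectedComponent.eq.mp this).symm
          -- the half-component argument
          have hPQ : ∀ w w' : V, w ∈ ({u, v} : Set V) → w' ∈ ({u, v} : Set V) → w' ≠ w →
              ∀ Dw : (G.induce (({x0, y0} : Set V)ᶜ)).ConnectedComponent,
              w' ∉ csupp Dw → (Cset ∩ csupp Dw).Nonempty → False := by
            intro w w' hwK hw'K hww' Dw hw'nm hne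
            have hxw : x0 ≠ w := by
              rcases hwK with rfl | hw
              · exact hx0u
              · cases hw; exact hx0v
            have hcl : MyClosed G {x0, w} (Cset ∩ csupp Dw) := by
              rintro a ⟨haC, haD⟩ b hab
              have h1 := hCclosed a haC b hab
              have h2 := csupp_closed Dw a haD b hab
              rcases h1 with h1 | h1
              · rcases h2 with h2 | h2
                · exact Or.inl ⟨h1, h2⟩
                · rcases h2 with rfl | rfl
                  · exact Or.inr (Or.inl rfl)
                  · exact absurd h1 hyC
              · -- b ∈ {u, v}
                have hbw : b = w := by
                  rcases h2 with h2 | h2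
                  · -- b ∈ csupp Dw : then b must be w' or w ; w' excluded
                    by_contra hbw
                    have hbw' : b = w' := by
                      rcases h1 with rfl | h1
                      · rcases hw'K with rfl | hw'
                        · rfl
                        · cases hw'
                          rcases hwK with rfl | hw
                          · exact absurd rfl hbw
                          · cases hw; exact absurd rfl hww'
                      · cases h1
                        rcases hw'K with rfl | hw'
                        · rcases hwK with rfl | hw
                          · exact absurd rfl hww'
                          · cases hw; exact absurd rfl hbw
                        · cases hw'; rfl
                    exact hw'nm (hbw' ▸ h2)
                  · exfalso
                    rcases h2 with rfl | rfl
                    · exact hx0K h1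
                    · exact hyK h1
                exact Or.inr (Or.inr hbw)
            have hsub : Cset ∩ csupp Dw ⊆ (({x0, w} : Set V)ᶜ) := by
              rintro z ⟨hzC, hzD⟩ hmem
              rcases hmem with rfl | hmem
              · exact (csupp_subset Dw hzD) (Or.inl rfl)
              · cases hmem
                exact (hCsubK hzC) hwK
            have hco : ((({x0, w} : Set V)ᶜ) \ (Cset ∩ csupp Dw)).Nonempty := by
              refine ⟨w', fun hmem => ?_, fun hmem2 => ?_⟩
              · rcases hmem with h | h
                · rcases hw'K with rfl | hw'
                  · exact hx0u h.symm
                  · cases hw'; exact hx0v h.symm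
                · cases h; exact hww' rfl
              · have := hmem2.1
                rcases hw'K with rfl | hw'
                · exact hCu this
                · cases hw'; exact hCv this
            have hsize := hmin' x0 w hxw _ hne hsub hcl hco
            have hsub2 : Cset ∩ csupp Dw ⊆ Cset \ {x0} := by
              rintro z ⟨hzC, hzD⟩
              refine ⟨hzC, fun hzx => ?_⟩
              cases hzx
              exact (csupp_subset Dw hzD) (Or.inl rfl)
            have h1 : (Cset ∩ csupp Dw).ncard ≤ (Cset \ {x0}).ncard :=
              Set.ncard_le_ncard hsub2 (Set.toFinite _)
            have h2 : (Cset \ {x0}).ncard < Cset.ncard :=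
              Set.ncard_diff_singleton_lt_of_mem hx0 (Set.toFinite _)
            omega
          -- pick a vertex of Cset other than x0
          have hCbig : (Cset \ {x0}).Nonempty := by
            rw [Set.nonempty_iff_ne_empty]
            intro h
            have := Set.ncard_diff_singleton_of_mem hx0
            rw [h, Set.ncard_empty] at this
            omega
          obtain ⟨z, hzC, hzx⟩ := hCbig
          have hzW : z ∈ (({x0, y0} : Set V)ᶜ) := by
            intro hmem
            rcases hmem with h | h
            · exact hzx h
            · cases h; exact hyC hzC
          have hzmem : z ∈ csupp ((G.induce (({x0, y0} : Set V)ᶜ)).connectedComponentMk ⟨z, hzW⟩) :=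
            (mem_csupp_iff _ (a := ⟨z, hzW⟩)).mpr rfl
          rcases hstepB ((G.induce (({x0, y0} : Set V)ᶜ)).connectedComponentMk ⟨z, hzW⟩) with hb | hb
          · -- u in z's component, so v is not
            refine hPQ u v (Or.inl rfl) (Or.inr rfl) huv.symm _ ?_ ⟨z, hzC, hzmem⟩
            intro hv
            apply hDuv
            have h1 := (mem_csupp_iff _ (a := ⟨u, huW⟩)).mp hb
            have h2 := (mem_csupp_iff _ (a := ⟨v, hvW⟩)).mp hv
            rw [← h1, ← h2]
          · refine hPQ v u (Or.inr rfl) (Or.inl rfl) huv _ ?_ ⟨z, hzC, hzmem⟩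
            intro hu
            apply hDuv
            have h1 := (mem_csupp_iff _ (a := ⟨v, hvW⟩)).mp hb
            have h2 := (mem_csupp_iff _ (a := ⟨u, huW⟩)).mp hu
            rw [← h1, ← h2]
end

section
/- Let G be a connected graph of order divisible by 2. Then G^2 contains a K_2-factor; equivalently, V(G) can be partitioned into pairs of vertices at distance at most 2 in G. -/
open SimpleGraph Finset

section Aux

variable {V : Type*} [DecidableEq V] {G : SimpleGraph V}

/-- There is a walk from `x` to `y` whose support lies in `s`. -/
def WalkIn (G : SimpleGraph V) (s : Finset V) (x y : V) : Prop :=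
  ∃ p : G.Walk x y, ∀ z ∈ p.support, z ∈ s

/-- Distance within `s`. -/
noncomputable def dIn (G : SimpleGraph V) (s : Finset V) (r x : V) : ℕ :=
  sInf {n | ∃ p : G.Walk r x, p.length = n ∧ ∀ z ∈ p.support, z ∈ s}

lemma dIn_le {s : Finset V} {r x : V} {p : G.Walk r x} (hp : ∀ z ∈ p.support, z ∈ s) :
    dIn G s r x ≤ p.length := Nat.sInf_le ⟨p, rfl, hp⟩

lemma exists_min_walk {s : Finset V} {r x : V} (h : WalkIn G s r x) :
    ∃ p : G.Walk r x, p.length = dIn G s r x ∧ ∀ z ∈ p.support, z ∈ s := by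
  obtain ⟨p, hp⟩ := h
  obtain ⟨q, hq, hqs⟩ := Nat.sInf_mem (⟨p.length, p, rfl, hp⟩ :
    {n | ∃ p : G.Walk r x, p.length = n ∧ ∀ z ∈ p.support, z ∈ s}.Nonempty)
  exact ⟨q, hq, hqs⟩

lemma eq_of_dIn_eq_zero {s : Finset V} {r x : V} (h : WalkIn G s r x)
    (h0 : dIn G s r x = 0) : r = x := by
  obtain ⟨p, hl, -⟩ := exists_min_walk h
  exact Walk.eq_of_length_eq_zero (hl.trans h0)

lemma dIn_position {s : Finset V} {r x : V} {p : G.Walk r x}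
    (hps : ∀ z ∈ p.support, z ∈ s) (hmin : p.length = dIn G s r x)
    {z : V} (hz : z ∈ p.support) :
    dIn G s r z = (p.takeUntil z hz).length ∧
      dIn G s r x = dIn G s r z + (p.dropUntil z hz).length := by
  have hsplit : (p.takeUntil z hz).length + (p.dropUntil z hz).length = p.length := by
    rw [← Walk.length_append, Walk.take_spec]
  have htk : ∀ y ∈ (p.takeUntil z hz).support, y ∈ s :=
    fun y hy => hps y (Walk.support_takeUntil_subset _ hz hy)
  have hdr : ∀ y ∈ (p.dropUntil z hz).support, y ∈ s :=
    fun y hy => hps y (Walk.support_dropUntil_subset _ hz hy)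
  have h1 : dIn G s r z ≤ (p.takeUntil z hz).length := dIn_le htk
  obtain ⟨q, hql, hqs⟩ := exists_min_walk (G := G) (s := s) ⟨p.takeUntil z hz, htk⟩
  have h2 : dIn G s r x ≤ dIn G s r z + (p.dropUntil z hz).length := by
    have hsup : ∀ y ∈ (q.append (p.dropUntil z hz)).support, y ∈ s := by
      intro y hy
      rcases (Walk.mem_support_append_iff _ _).mp hy with h | h
      · exact hqs y h
      · exact hdr y h
    have := dIn_le (G := G) (s := s) hsup
    rwa [Walk.length_append, hql] at this
  exact ⟨by omega, by omega⟩

lemma eq_end_of_mem_support_min {s : Finset V} {r x : V} {p : G.Walk r x}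
    (hps : ∀ z ∈ p.support, z ∈ s) (hmin : p.length = dIn G s r x)
    {z : V} (hz : z ∈ p.support) (hge : dIn G s r x ≤ dIn G s r z) : z = x := by
  obtain ⟨h1, h2⟩ := dIn_position hps hmin hz
  exact Walk.eq_of_length_eq_zero (by omega : (p.dropUntil z hz).length = 0)

lemma key_lemma (G : SimpleGraph V) :
    ∀ s : Finset V, 2 ∣ s.card → (∀ x ∈ s, ∀ y ∈ s, WalkIn G s x y) →
      ∃ P : Finpartition s, ∀ p ∈ P.parts, p.card = 2 ∧ (gpow G 2).IsClique (p : Set V) := by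
  intro s
  induction s using Finset.strongInduction with
  | _ s ih =>
  intro hcard hcon
  rcases s.eq_empty_or_nonempty with rfl | ⟨r, hr⟩
  · exact ⟨Finpartition.empty _, by simp [Finpartition.empty]⟩
  obtain ⟨u, hu, hmax⟩ := s.exists_max_image (dIn G s r) ⟨r, hr⟩
  set d := dIn G s r u with hd
  have hcard2 : 2 ≤ s.card := by
    rcases hcard with ⟨k, hk⟩
    have : s.card ≠ 0 := Finset.card_ne_zero_of_mem hr
    omega
  obtain ⟨x₀, hx₀, hx₀r⟩ := Finset.exists_mem_ne (s := s) (by omega) r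
  have hd1 : 1 ≤ d := by
    by_contra h
    have hx0 : dIn G s r x₀ = 0 := by have := hmax x₀ hx₀; omega
    exact hx₀r (eq_of_dIn_eq_zero (hcon r hr x₀ hx₀) hx0).symm
  obtain ⟨W, hWl, hWs⟩ := exists_min_walk (hcon r hr u hu)
  have hWrev : ¬ W.reverse.Nil := by
    rw [Walk.not_nil_iff_lt_length, Walk.length_reverse]; omega
  obtain ⟨p, hup, q, hq⟩ := Walk.not_nil_iff.mp hWrev
  have hpsupp : p ∈ W.support := by
    have : p ∈ W.reverse.support := by
      rw [hq, Walk.support_cons]; exact List.mem_cons_of_mem _ q.start_mem_support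
    rwa [Walk.support_reverse, List.mem_reverse] at this
  have hps : p ∈ s := hWs p hpsupp
  have hqlen : q.length = d - 1 := by
    have h1 : W.reverse.length = W.length := Walk.length_reverse W
    rw [hq, Walk.length_cons] at h1; omega
  have hqs : ∀ z ∈ q.reverse.support, z ∈ s := by
    intro z hz
    rw [Walk.support_reverse, List.mem_reverse] at hz
    have : z ∈ W.reverse.support := by
      rw [hq, Walk.support_cons]; exact List.mem_cons_of_mem _ hz
    rw [Walk.support_reverse, List.mem_reverse] at this
    exact hWs z this
  have hdp_le : dIn G s r p ≤ d - 1 := by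
    have := dIn_le (G := G) (s := s) hqs
    rwa [Walk.length_reverse, hqlen] at this
  have hdp_ge : d ≤ dIn G s r p + 1 := by
    obtain ⟨m, hml, hms⟩ := exists_min_walk (hcon r hr p hps)
    have hsup : ∀ z ∈ (m.concat hup.symm).support, z ∈ s := by
      intro z hz
      rw [Walk.concat_eq_append] at hz
      rcases (Walk.mem_support_append_iff _ _).mp hz with h | h
      · exact hms z h
      · simp only [Walk.support_cons, Walk.support_nil, List.mem_cons,
          List.mem_singleton, List.not_mem_nil, or_false] at h
        rcases h with rfl | rfl
        · exact hps
        · exact hu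
    have hle := dIn_le (G := G) (s := s) hsup
    rwa [Walk.length_concat, hml] at hle
  have hdp : dIn G s r p = d - 1 := by omega
  have hune : u ≠ p := by
    intro h
    have : dIn G s r p = d := by rw [← h]
    omega
  -- common continuation
  suffices h : ∃ c ∈ s, c ≠ u ∧ (gpow G 2).Adj u c ∧
      (∀ x ∈ s, x ≠ u → x ≠ c →
        ∃ pw : G.Walk r x, ∀ z ∈ pw.support, z ∈ s ∧ z ≠ u ∧ z ≠ c) by
    obtain ⟨c, hcs, hcu, hadj, havoid⟩ := h
    set s' := s \ {u, c} with hs'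
    have hsub : {u, c} ⊆ s := by
      intro z hz
      rcases Finset.mem_insert.mp hz with rfl | hz
      · exact hu
      · exact (Finset.mem_singleton.mp hz) ▸ hcs
    have hpair : ({u, c} : Finset V).card = 2 := Finset.card_pair hcu.symm
    have hcard' : s'.card = s.card - 2 := by
      rw [hs', Finset.card_sdiff_of_subset hsub, hpair]
    have hss : s' ⊂ s := Finset.sdiff_ssubset hsub ⟨u, Finset.mem_insert_self _ _⟩
    have hcon' : ∀ x ∈ s', ∀ y ∈ s', WalkIn G s' x y := by
      intro x hx y hy
      obtain ⟨hxs, hxuc⟩ := Finset.mem_sdiff.mp hx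
      obtain ⟨hys, hyuc⟩ := Finset.mem_sdiff.mp hy
      simp only [Finset.mem_insert, Finset.mem_singleton, not_or] at hxuc hyuc
      obtain ⟨px, hpx⟩ := havoid x hxs hxuc.1 hxuc.2
      obtain ⟨py, hpy⟩ := havoid y hys hyuc.1 hyuc.2
      refine ⟨px.reverse.append py, ?_⟩
      intro z hz
      have hz' : z ∈ px.support ∨ z ∈ py.support := by
        rcases (Walk.mem_support_append_iff _ _).mp hz with h | h
        · left; rwa [Walk.support_reverse, List.mem_reverse] at h
        · right; exact h
      have : z ∈ s ∧ z ≠ u ∧ z ≠ c := by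
        rcases hz' with h | h
        · exact hpx z h
        · exact hpy z h
      rw [hs', Finset.mem_sdiff]
      exact ⟨this.1, by simp [this.2.1, this.2.2]⟩
    obtain ⟨P', hP'⟩ := ih s' hss (by omega) hcon'
    refine ⟨P'.extend (b := {u, c}) ?_ ?_ ?_, ?_⟩
    · simp [Finset.bot_eq_empty]
    · exact Finset.sdiff_disjoint
    · rw [Finset.sup_eq_union, hs']
      exact Finset.sdiff_union_of_subset hsub
    · intro t ht
      rw [Finpartition.extend_parts, Finset.mem_insert] at ht
      rcases ht with rfl | ht
      · refine ⟨hpair, ?_⟩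
        rw [Finset.coe_insert, Finset.coe_singleton]
        exact SimpleGraph.isClique_pair.mpr (fun _ => hadj)
      · exact hP' t ht
  by_cases hW2 : ∃ w ∈ s, w ≠ u ∧ G.Adj p w ∧ dIn G s r w = d
  · -- Case A: pair u with w, both adjacent to p
    obtain ⟨w, hws, hwu, hpw, hdw⟩ := hW2
    refine ⟨w, hws, hwu, ⟨hwu.symm, ?_⟩, ?_⟩
    · have := SimpleGraph.dist_le (Walk.cons hup (Walk.cons hpw Walk.nil))
      simpa using this
    · intro x hxs hxu hxw
      obtain ⟨Wx, hWxl, hWxs⟩ := exists_min_walk (hcon r hr x hxs)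
      refine ⟨Wx, fun z hz => ⟨hWxs z hz, ?_, ?_⟩⟩
      · rintro rfl
        exact hxu (eq_end_of_mem_support_min hWxs hWxl hz (hmax x hxs)).symm
      · rintro rfl
        exact hxw (eq_end_of_mem_support_min hWxs hWxl hz
          (by rw [hdw]; exact hmax x hxs)).symm
  · -- Case B: pair u with p
    refine ⟨p, hps, hune.symm, ⟨hune, ?_⟩, ?_⟩
    · have := SimpleGraph.dist_le (Walk.cons hup Walk.nil)
      simp only [Walk.length_cons, Walk.length_nil] at this
      omega
    · intro x hxs hxu hxp
      obtain ⟨Wx, hWxl, hWxs⟩ := exists_min_walk (hcon r hr x hxs)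
      have hunot : ∀ z ∈ Wx.support, z ≠ u := by
        rintro z hz rfl
        exact hxu (eq_end_of_mem_support_min hWxs hWxl hz (hmax x hxs)).symm
      refine ⟨Wx, fun z hz => ⟨hWxs z hz, hunot z hz, ?_⟩⟩
      rintro rfl
      -- z = p lies on a minimal walk to x: derive contradiction with hW2
      obtain ⟨h1, h2⟩ := dIn_position hWxs hWxl hz
      have hdrop : ¬ (Wx.dropUntil z hz).Nil := Walk.not_nil_of_ne (fun h => hxp h.symm)
      obtain ⟨z', hadj', q₂, heq⟩ := Walk.not_nil_iff.mp hdrop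
      have hz'dx : z' ∈ (Wx.dropUntil z hz).support := by
        rw [heq, Walk.support_cons]; exact List.mem_cons_of_mem _ q₂.start_mem_support
      have hz'W : z' ∈ Wx.support := Walk.support_dropUntil_subset _ hz hz'dx
      have hz's : z' ∈ s := hWxs z' hz'W
      have hq₂s : ∀ y ∈ q₂.support, y ∈ s := by
        intro y hy
        have : y ∈ (Wx.dropUntil z hz).support := by
          rw [heq, Walk.support_cons]; exact List.mem_cons_of_mem _ hy
        exact hWxs y (Walk.support_dropUntil_subset _ hz this)
      have hdroplen : (Wx.dropUntil z hz).length = q₂.length + 1 := by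
        rw [heq, Walk.length_cons]
      -- lower bound on dIn z'
      have hub : dIn G s r x ≤ dIn G s r z' + q₂.length := by
        obtain ⟨m, hml, hms⟩ := exists_min_walk (hcon r hr z' hz's)
        have hsup : ∀ y ∈ (m.append q₂).support, y ∈ s := by
          intro y hy
          rcases (Walk.mem_support_append_iff _ _).mp hy with h | h
          · exact hms y h
          · exact hq₂s y h
        have := dIn_le (G := G) (s := s) hsup
        rwa [Walk.length_append, hml] at this
      have hz'le : dIn G s r z' ≤ d := hmax z' hz's
      have hz'd : dIn G s r z' = d := by omega
      exact hW2 ⟨z', hz's, hunot z' hz'W, hadj', hz'd⟩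

end Aux

theorem square_has_K2_factor {V : Type*} [Fintype V] [DecidableEq V] (G : SimpleGraph V)
    (hG : G.Connected) (hdvd : 2 ∣ Fintype.card V) :
    HasCliqueFactor (gpow G 2) 2 := by
  obtain ⟨P, hP⟩ := key_lemma G Finset.univ (by simpa using hdvd)
    (fun x _ y _ => ((hG.preconnected x y).elim fun p => ⟨p, fun z _ => Finset.mem_univ z⟩))
  exact ⟨P, hP⟩
end
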